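/- arXiv:2510.14009 — 3 statements merged into one kernel-verified Lean document; each statement's English description precedes it below -/
import Mathlib

section
/- Under the layer-wise setup, let f : E → ℝ be differentiable and layer-wise L-smooth. Fix points X_t ∈ E, vectors B_t^ℓ ∈ E_ℓ, step sizes η_t^ℓ ≥ 0, and directions O_t^ℓ ∈ E_ℓ satisfying ‖O_t^ℓ‖_{(ℓ)} ≤ 1 and ⟨B_t^ℓ, O_t^ℓ⟩ = −‖B_t^ℓ‖_{(ℓ)*}, and define X_{t+1} by X_{t+1}^ℓ = X_t^ℓ + η_t^ℓ·O_t^ℓ for every layer ℓ. Then f(X_{t+1}) ≤ f(X_t) + Σ_{ℓ=1}^{p} ( −η_t^ℓ·‖∇_ℓ f(X_t)‖_{(ℓ)*} + 2·η_t^ℓ·‖B_t^ℓ − ∇_ℓ f(X_t)‖_{(ℓ)*} + (L_ℓ/2)·(η_t^ℓ)² ). -/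
open scoped RealInnerProductSpace

/-- The dual norm of a (semi)norm `N` on a real inner product space:
`‖Y‖_* = sup { ⟪Y, X⟫ : N X ≤ 1 }`. -/
noncomputable def dualNorm {E : Type*} [NormedAddCommGroup E] [InnerProductSpace ℝ E]
    (N : E → ℝ) (Y : E) : ℝ :=
  sSup ((fun X => ⟪Y, X⟫) '' {X | N X ≤ 1})

set_option linter.unusedSectionVars false
set_option linter.unusedVariables false

lemma seminorm_sum_le {E : Type*} [NormedAddCommGroup E] [NormedSpace ℝ E]
    (N : Seminorm ℝ E) {ι : Type*} (s : Finset ι) (v : ι → E) :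
    N (∑ i ∈ s, v i) ≤ ∑ i ∈ s, N (v i) := by
  classical
  induction s using Finset.cons_induction with
  | empty => simp
  | cons i s hi ih =>
    rw [Finset.sum_cons, Finset.sum_cons]
    exact le_trans (map_add_le_add N _ _) (by linarith)

lemma seminorm_comparison {E : Type*} [NormedAddCommGroup E] [NormedSpace ℝ E]
    [FiniteDimensional ℝ E] (N : Seminorm ℝ E) (hN : ∀ x, N x = 0 → x = 0) :
    ∃ C : ℝ, 0 < C ∧ ∀ x, ‖x‖ ≤ C * N x := by
  -- upper bound : N x ≤ M * ‖x‖
  obtain ⟨M, hM0, hM⟩ : ∃ M : ℝ, 0 ≤ M ∧ ∀ x, N x ≤ M * ‖x‖ := by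
    classical
    let b := Module.finBasis ℝ E
    refine ⟨∑ i, ‖LinearMap.toContinuousLinearMap (b.coord i)‖ * N (b i), ?_, ?_⟩
    · exact Finset.sum_nonneg fun i _ => mul_nonneg (norm_nonneg _) (apply_nonneg _ _)
    · intro x
      have hx : x = ∑ i, b.repr x i • b i := (b.sum_repr x).symm
      calc N x ≤ ∑ i, N (b.repr x i • b i) := by
              conv_lhs => rw [hx]
              exact seminorm_sum_le N Finset.univ _
        _ ≤ ∑ i, (‖LinearMap.toContinuousLinearMap (b.coord i)‖ * N (b i)) * ‖x‖ := by
              refine Finset.sum_le_sum fun i _ => ?_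
              rw [map_smul_eq_mul]
              have h1 : ‖b.repr x i‖ ≤ ‖LinearMap.toContinuousLinearMap (b.coord i)‖ * ‖x‖ := by
                simpa [Module.Basis.coord_apply] using
                  (LinearMap.toContinuousLinearMap (b.coord i)).le_opNorm x
              calc ‖b.repr x i‖ * N (b i)
                  ≤ (‖LinearMap.toContinuousLinearMap (b.coord i)‖ * ‖x‖) * N (b i) :=
                    mul_le_mul_of_nonneg_right h1 (apply_nonneg _ _)
                _ = (‖LinearMap.toContinuousLinearMap (b.coord i)‖ * N (b i)) * ‖x‖ := by ring
        _ = (∑ i, ‖LinearMap.toContinuousLinearMap (b.coord i)‖ * N (b i)) * ‖x‖ := by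
              rw [Finset.sum_mul]
  -- N is continuous
  have hcont : Continuous fun x => N x := by
    refine (LipschitzWith.of_dist_le_mul (K := M.toNNReal) (f := fun x => N x) ?_).continuous
    intro x y
    rw [Real.dist_eq, dist_eq_norm]
    have h1 : N x - N y ≤ N (x - y) := by
      have := map_add_le_add N (x - y) y
      simp only [sub_add_cancel] at this
      linarith
    have h2 : N y - N x ≤ N (x - y) := by
      have := map_add_le_add N (y - x) x
      simp only [sub_add_cancel] at this
      have hneg : N (y - x) = N (x - y) := by
        rw [← neg_sub x y, map_neg_eq_map]
      linarith
    have habs : |N x - N y| ≤ N (x - y) := abs_le.mpr ⟨by linarith, by linarith⟩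
    calc |N x - N y| ≤ N (x - y) := habs
      _ ≤ M * ‖x - y‖ := hM _
      _ ≤ M.toNNReal * ‖x - y‖ := by
          exact mul_le_mul_of_nonneg_right (Real.le_coe_toNNReal M) (norm_nonneg _)
  rcases subsingleton_or_nontrivial E with h | h
  · refine ⟨1, one_pos, fun x => ?_⟩
    have : x = 0 := Subsingleton.elim x 0
    simp [this]
  · obtain ⟨z, hz, hzmin⟩ := (isCompact_sphere (0 : E) 1).exists_isMinOn
      (NormedSpace.sphere_nonempty.mpr zero_le_one) hcont.continuousOn
    have hz1 : ‖z‖ = 1 := mem_sphere_zero_iff_norm.mp hz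
    have hzne : z ≠ 0 := by intro h0; rw [h0] at hz1; simp at hz1
    have hm0 : 0 < N z := by
      rcases (apply_nonneg N z).lt_or_eq with h' | h'
      · exact h'
      · exact absurd (hN z h'.symm) hzne
    refine ⟨(N z)⁻¹, inv_pos.mpr hm0, fun x => ?_⟩
    rcases eq_or_ne x 0 with rfl | hx
    · simp
    · have hxn : 0 < ‖x‖ := norm_pos_iff.mpr hx
      have hu : (‖x‖⁻¹ • x) ∈ Metric.sphere (0 : E) 1 := by
        rw [mem_sphere_zero_iff_norm, norm_smul, norm_inv, norm_norm]
        field_simp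
      have h2 : N z ≤ N (‖x‖⁻¹ • x) := hzmin hu
      rw [map_smul_eq_mul, norm_inv, norm_norm] at h2
      have h3 : ‖x‖ * N z ≤ N x := (le_inv_mul_iff₀ hxn).mp h2
      rw [le_inv_mul_iff₀ hm0, mul_comm]
      exact h3


section DualNormLemmas
variable {E : Type*} [NormedAddCommGroup E] [InnerProductSpace ℝ E] [FiniteDimensional ℝ E]
  (N : Seminorm ℝ E)

lemma dualNorm_set_nonempty (Y : E) :
    ((fun X => ⟪Y, X⟫) '' {X | N X ≤ 1}).Nonempty :=
  ⟨⟪Y, (0 : E)⟫, Set.mem_image_of_mem _ (by simp [Set.mem_setOf_eq])⟩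

lemma dualNorm_bddAbove (hN : ∀ x, N x = 0 → x = 0) (Y : E) :
    BddAbove ((fun X => ⟪Y, X⟫) '' {X | N X ≤ 1}) := by
  obtain ⟨C, hC0, hC⟩ := seminorm_comparison N hN
  refine ⟨‖Y‖ * C, ?_⟩
  rintro - ⟨X, hX, rfl⟩
  calc ⟪Y, X⟫ ≤ ‖Y‖ * ‖X‖ := real_inner_le_norm Y X
    _ ≤ ‖Y‖ * (C * N X) := by
        exact mul_le_mul_of_nonneg_left (hC X) (norm_nonneg _)
    _ ≤ ‖Y‖ * (C * 1) := by
        refine mul_le_mul_of_nonneg_left ?_ (norm_nonneg _)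
        exact mul_le_mul_of_nonneg_left hX hC0.le
    _ = ‖Y‖ * C := by ring

lemma inner_le_dualNorm (hN : ∀ x, N x = 0 → x = 0) {X Y : E} (hX : N X ≤ 1) : ⟪Y, X⟫ ≤ dualNorm N Y :=
  le_csSup (dualNorm_bddAbove N hN Y) (Set.mem_image_of_mem _ hX)

lemma dualNorm_le (hN : ∀ x, N x = 0 → x = 0) {Y : E} {c : ℝ} (h : ∀ X, N X ≤ 1 → ⟪Y, X⟫ ≤ c) :
    dualNorm N Y ≤ c := by
  refine csSup_le (dualNorm_set_nonempty N Y) ?_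
  rintro - ⟨X, hX, rfl⟩
  exact h X hX

lemma dualNorm_nonneg (hN : ∀ x, N x = 0 → x = 0) (Y : E) : 0 ≤ dualNorm N Y := by
  have := inner_le_dualNorm N hN (X := (0 : E)) (Y := Y) (by simp)
  simpa using this

lemma dualNorm_neg (hN : ∀ x, N x = 0 → x = 0) (Y : E) : dualNorm N (-Y) = dualNorm N Y := by
  have key : ∀ Z : E, dualNorm N (-Z) ≤ dualNorm N Z := by
    intro Z
    refine dualNorm_le N hN fun X hX => ?_
    have hX' : N (-X) ≤ 1 := by rwa [map_neg_eq_map]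
    have := inner_le_dualNorm N hN (Y := Z) hX'
    simpa [inner_neg_left, inner_neg_right] using this
  refine le_antisymm (key Y) ?_
  have := key (-Y)
  simpa using this

lemma dualNorm_triangle (hN : ∀ x, N x = 0 → x = 0) (Y Z : E) :
    dualNorm N Y ≤ dualNorm N Z + dualNorm N (Y - Z) := by
  refine dualNorm_le N hN fun X hX => ?_
  have h1 := inner_le_dualNorm N hN (Y := Z) hX
  have h2 := inner_le_dualNorm N hN (Y := Y - Z) hX
  have : ⟪Y, X⟫ = ⟪Z, X⟫ + ⟪Y - Z, X⟫ := by
    rw [inner_sub_left]; ring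
  linarith


end DualNormLemmas

/-- One-step descent lemma for LMO-based layer-wise updates. -/
theorem stmt_1 {p : ℕ} {E : Fin p → Type*}
    [∀ ℓ, NormedAddCommGroup (E ℓ)] [∀ ℓ, InnerProductSpace ℝ (E ℓ)]
    [∀ ℓ, FiniteDimensional ℝ (E ℓ)]
    (N : ∀ ℓ, Seminorm ℝ (E ℓ)) (hNdef : ∀ ℓ x, N ℓ x = 0 → x = 0)
    (f : PiLp 2 E → ℝ) (hf : Differentiable ℝ f)
    (L : Fin p → ℝ) (hL : ∀ ℓ, 0 ≤ L ℓ)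
    (hsmooth : ∀ ℓ (X Y : PiLp 2 E),
      dualNorm (N ℓ) (gradient f X ℓ - gradient f Y ℓ) ≤ L ℓ * N ℓ (X ℓ - Y ℓ))
    (Xt Xt1 : PiLp 2 E) (B O : ∀ ℓ, E ℓ) (η : Fin p → ℝ)
    (hη : ∀ ℓ, 0 ≤ η ℓ)
    (hO_ball : ∀ ℓ, N ℓ (O ℓ) ≤ 1)
    (hO_lmo : ∀ ℓ, ⟪B ℓ, O ℓ⟫ = -dualNorm (N ℓ) (B ℓ))
    (hupd : ∀ ℓ, Xt1 ℓ = Xt ℓ + η ℓ • O ℓ) :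
    f Xt1 ≤ f Xt + ∑ ℓ,
      (-(η ℓ) * dualNorm (N ℓ) (gradient f Xt ℓ)
        + 2 * η ℓ * dualNorm (N ℓ) (B ℓ - gradient f Xt ℓ)
        + L ℓ / 2 * η ℓ ^ 2) := by
    classical
  set D : PiLp 2 E := Xt1 - Xt with hDdef
  have hD : ∀ ℓ, D ℓ = η ℓ • O ℓ := by
    intro ℓ
    simp [hDdef, PiLp.sub_apply, hupd ℓ]
  have hXt1 : Xt1 = Xt + D := by simp [hDdef]
  set S : ℝ := ∑ ℓ, L ℓ * η ℓ ^ 2 with hSdef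
  have hS0 : 0 ≤ S := Finset.sum_nonneg fun ℓ _ => mul_nonneg (hL ℓ) (sq_nonneg _)
  -- derivative of the restriction to the segment
  have hg : ∀ t : ℝ, HasDerivAt (fun t : ℝ => f (Xt + t • D))
      ⟪gradient f (Xt + t • D), D⟫ t := by
    intro t
    have hline : HasDerivAt (fun t : ℝ => Xt + t • D) D t := by
      simpa using ((hasDerivAt_id t).smul_const D).const_add Xt
    have hfd := ((hf (Xt + t • D)).hasGradientAt).hasFDerivAt
    have hcomp := hfd.comp_hasDerivAt t hline
    rw [InnerProductSpace.toDual_apply_apply] at hcomp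
    exact hcomp
  -- key inner product bound along the segment
  have key : ∀ s : ℝ, 0 ≤ s → s ≤ 1 →
      ⟪gradient f (Xt + s • D) - gradient f Xt, D⟫ ≤ s * S := by
    intro s hs0 hs1
    rw [PiLp.inner_apply, hSdef, Finset.mul_sum]
    refine Finset.sum_le_sum fun ℓ _ => ?_
    have hGl : (gradient f (Xt + s • D) - gradient f Xt) ℓ
        = gradient f (Xt + s • D) ℓ - gradient f Xt ℓ := by
      simp [PiLp.sub_apply]
    rw [hGl, hD ℓ, real_inner_smul_right]
    have h1 : ⟪gradient f (Xt + s • D) ℓ - gradient f Xt ℓ, O ℓ⟫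
        ≤ dualNorm (N ℓ) (gradient f (Xt + s • D) ℓ - gradient f Xt ℓ) :=
      inner_le_dualNorm (N ℓ) (hNdef ℓ) (hO_ball ℓ)
    have h2 := hsmooth ℓ (Xt + s • D) Xt
    have h3 : N ℓ ((Xt + s • D) ℓ - Xt ℓ) ≤ s * η ℓ := by
      have hx : (Xt + s • D) ℓ - Xt ℓ = s • (η ℓ • O ℓ) := by
        simp [PiLp.add_apply, PiLp.smul_apply, hD ℓ]
      rw [hx, map_smul_eq_mul, map_smul_eq_mul]
      have hOb := hO_ball ℓ
      have hNO : 0 ≤ N ℓ (O ℓ) := apply_nonneg _ _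
      rw [Real.norm_eq_abs, Real.norm_eq_abs, abs_of_nonneg hs0, abs_of_nonneg (hη ℓ)]
      nlinarith [mul_nonneg hs0 (hη ℓ)]
    have h4 : L ℓ * N ℓ ((Xt + s • D) ℓ - Xt ℓ) ≤ L ℓ * (s * η ℓ) :=
      mul_le_mul_of_nonneg_left h3 (hL ℓ)
    have h5 : ⟪gradient f (Xt + s • D) ℓ - gradient f Xt ℓ, O ℓ⟫ ≤ L ℓ * (s * η ℓ) := by
      linarith
    calc η ℓ * ⟪gradient f (Xt + s • D) ℓ - gradient f Xt ℓ, O ℓ⟫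
        ≤ η ℓ * (L ℓ * (s * η ℓ)) := mul_le_mul_of_nonneg_left h5 (hη ℓ)
      _ = s * (L ℓ * η ℓ ^ 2) := by ring
  -- the auxiliary function and its derivative
  have hφ : ∀ t : ℝ, HasDerivAt
      (fun t : ℝ => f (Xt + t • D) - t * ⟪gradient f Xt, D⟫ - t ^ 2 * (S / 2))
      (⟪gradient f (Xt + t • D), D⟫ - ⟪gradient f Xt, D⟫ - t * S) t := by
    intro t
    have h1 := ((hg t).sub ((hasDerivAt_id t).mul_const ⟪gradient f Xt, D⟫)).sub
      ((hasDerivAt_pow 2 t).mul_const (S / 2))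
    convert h1 using 1
    · rfl
    · rfl
    · rfl
    push_cast
    ring
  have hanti : AntitoneOn
      (fun t : ℝ => f (Xt + t • D) - t * ⟪gradient f Xt, D⟫ - t ^ 2 * (S / 2))
      (Set.Icc 0 1) := by
    refine antitoneOn_of_deriv_nonpos (convex_Icc 0 1) ?_ ?_ ?_
    · exact (Differentiable.continuous fun t => (hφ t).differentiableAt).continuousOn
    · intro x _
      exact ((hφ x).differentiableAt).differentiableWithinAt
    · intro x hx
      rw [interior_Icc] at hx
      rw [(hφ x).deriv]
      have hkey := key x hx.1.le hx.2.le
      rw [inner_sub_left] at hkey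
      linarith
  have h01 := hanti (Set.left_mem_Icc.mpr zero_le_one)
    (Set.right_mem_Icc.mpr zero_le_one) zero_le_one
  simp only [zero_smul, add_zero, one_smul, zero_mul, mul_zero, zero_pow, sub_zero,
    one_mul, one_pow] at h01
  -- h01 : f (Xt + D) - ⟪∇f Xt, D⟫ - S/2 ≤ f Xt
  have hstep : f Xt1 ≤ f Xt + ⟪gradient f Xt, D⟫ + S / 2 := by
    rw [hXt1]
    linarith
  -- bound the linear term
  have hsplit : ⟪gradient f Xt, D⟫ + S / 2
      = ∑ ℓ, (⟪gradient f Xt ℓ, D ℓ⟫ + L ℓ * η ℓ ^ 2 / 2) := by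
    rw [PiLp.inner_apply, hSdef, Finset.sum_add_distrib, Finset.sum_div]
  have hsum : ⟪gradient f Xt, D⟫ + S / 2 ≤ ∑ ℓ,
      (-(η ℓ) * dualNorm (N ℓ) (gradient f Xt ℓ)
        + 2 * η ℓ * dualNorm (N ℓ) (B ℓ - gradient f Xt ℓ)
        + L ℓ / 2 * η ℓ ^ 2) := by
    rw [hsplit]
    refine Finset.sum_le_sum fun ℓ _ => ?_
    rw [hD ℓ, real_inner_smul_right]
    have hB := hO_lmo ℓ
    have h2 : ⟪gradient f Xt ℓ - B ℓ, O ℓ⟫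
        ≤ dualNorm (N ℓ) (gradient f Xt ℓ - B ℓ) :=
      inner_le_dualNorm (N ℓ) (hNdef ℓ) (hO_ball ℓ)
    have h3 : dualNorm (N ℓ) (gradient f Xt ℓ)
        ≤ dualNorm (N ℓ) (B ℓ) + dualNorm (N ℓ) (gradient f Xt ℓ - B ℓ) :=
      dualNorm_triangle (N ℓ) (hNdef ℓ) _ _
    have h4 : dualNorm (N ℓ) (gradient f Xt ℓ - B ℓ)
        = dualNorm (N ℓ) (B ℓ - gradient f Xt ℓ) := by
      rw [← dualNorm_neg (N ℓ) (hNdef ℓ) (B ℓ - gradient f Xt ℓ), neg_sub]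
    have e1 : ⟪gradient f Xt ℓ, O ℓ⟫
        ≤ -dualNorm (N ℓ) (gradient f Xt ℓ)
          + 2 * dualNorm (N ℓ) (B ℓ - gradient f Xt ℓ) := by
      have hsplit2 : ⟪gradient f Xt ℓ, O ℓ⟫
          = ⟪B ℓ, O ℓ⟫ + ⟪gradient f Xt ℓ - B ℓ, O ℓ⟫ := by
        rw [inner_sub_left]; ring
      rw [hsplit2, hB]
      rw [h4] at h2 h3
      linarith
    have e2 : η ℓ * ⟪gradient f Xt ℓ, O ℓ⟫
        ≤ η ℓ * (-dualNorm (N ℓ) (gradient f Xt ℓ)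
          + 2 * dualNorm (N ℓ) (B ℓ - gradient f Xt ℓ)) :=
      mul_le_mul_of_nonneg_left e1 (hη ℓ)
    nlinarith [e2]
  linarith
end

section
/- Let X₁, …, X_T be a martingale difference sequence adapted to a filtration ℱ₁, …, ℱ_T, taking values in a real Hilbert space, such that ‖X_t‖ ≤ R_t almost surely for constants R_t ≥ 0. Then for any δ ∈ (0,1) and any fixed 1 ≤ t ≤ T, with probability at least 1 − δ: ‖Σ_{s=1}^{t} X_s‖ ≤ 4·√( log(2/δ)·Σ_{s=1}^{T} R_s² ). -/
open MeasureTheory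
open Real


lemma aux_sinh_le_mul_cosh {x : ℝ} (hx : 0 ≤ x) : Real.sinh x ≤ x * Real.cosh x := by
  have h : ∀ y : ℝ, HasDerivAt (fun z => z * Real.cosh z - Real.sinh z) (y * Real.sinh y) y := by
    intro y
    have h1 : HasDerivAt (fun z : ℝ => z * Real.cosh z) (1 * Real.cosh y + y * Real.sinh y) y :=
      (hasDerivAt_id y).mul (Real.hasDerivAt_cosh y)
    have := h1.sub (Real.hasDerivAt_sinh y)
    exact this.congr_deriv (by ring)
  have hmono : MonotoneOn (fun z => z * Real.cosh z - Real.sinh z) (Set.Ici (0:ℝ)) := by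
    apply monotoneOn_of_deriv_nonneg (convex_Ici 0)
      (Continuous.continuousOn (by continuity))
      (fun y _ => (h y).differentiableAt.differentiableWithinAt)
    intro y hy
    rw [(h y).deriv]
    exact mul_nonneg (le_of_lt (by simpa [interior_Ici] using hy))
      (Real.sinh_nonneg_iff.mpr (le_of_lt (by simpa [interior_Ici] using hy)))
  have := hmono (Set.self_mem_Ici) (Set.mem_Ici.mpr hx) hx
  simpa using this

lemma aux_cosh_le_exp_half_sq (x : ℝ) : Real.cosh x ≤ Real.exp (x ^ 2 / 2) := by
  -- reduce to x ≥ 0 by evenness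
  wlog hx : 0 ≤ x with Hw
  · have := Hw (-x) (by linarith)
    simpa [Real.cosh_neg] using this
  have h : ∀ y : ℝ, HasDerivAt (fun z => z ^ 2 / 2 - Real.log (Real.cosh z))
      (y - Real.sinh y / Real.cosh y) y := by
    intro y
    have h1 : HasDerivAt (fun z : ℝ => z ^ 2 / 2) y y := by
      have := (hasDerivAt_pow 2 y).div_const 2
      simpa using this
    have h2 : HasDerivAt (fun z : ℝ => Real.log (Real.cosh z)) (Real.sinh y / Real.cosh y) y :=
      (Real.hasDerivAt_cosh y).log (ne_of_gt (Real.cosh_pos y))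
    exact h1.sub h2
  have hmono : MonotoneOn (fun z => z ^ 2 / 2 - Real.log (Real.cosh z)) (Set.Ici (0:ℝ)) := by
    apply monotoneOn_of_deriv_nonneg (convex_Ici 0)
      (Continuous.continuousOn (by
        have hc : Continuous fun z : ℝ => Real.log (Real.cosh z) :=
          (Real.continuous_cosh.log (fun z => ne_of_gt (Real.cosh_pos z)))
        exact (continuous_pow 2).div_const 2 |>.sub hc))
      (fun y _ => (h y).differentiableAt.differentiableWithinAt)
    intro y hy
    rw [(h y).deriv]
    have hy0 : (0:ℝ) < y := by simpa [interior_Ici] using hy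
    have := aux_sinh_le_mul_cosh hy0.le
    rw [sub_nonneg, div_le_iff₀ (Real.cosh_pos y)]
    linarith
  have hkey := hmono (Set.self_mem_Ici) (Set.mem_Ici.mpr hx) hx
  simp only [Real.cosh_zero, Real.log_one] at hkey
  have : Real.log (Real.cosh x) ≤ x ^ 2 / 2 := by simpa using hkey
  calc Real.cosh x = Real.exp (Real.log (Real.cosh x)) := (Real.exp_log (Real.cosh_pos x)).symm
    _ ≤ Real.exp (x ^ 2 / 2) := Real.exp_le_exp.mpr this

lemma aux_convexOn_cosh_sqrt : ConvexOn ℝ (Set.Ici (0:ℝ)) (fun u => Real.cosh (Real.sqrt u)) := by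
  set h : ℝ → ℝ := fun u => Real.cosh (Real.sqrt u) with hh
  set φ : ℝ → ℝ := fun u => Real.sinh (Real.sqrt u) * (2 * Real.sqrt u)⁻¹ with hφ
  have hderiv : ∀ u : ℝ, 0 < u → HasDerivAt h (φ u) u := by
    intro u hu
    have hs : HasDerivAt Real.sqrt (1 / (2 * Real.sqrt u)) u := Real.hasDerivAt_sqrt hu.ne'
    have := (Real.hasDerivAt_cosh (Real.sqrt u)).comp u hs
    simpa [hh, hφ, Function.comp_def, div_eq_mul_inv, mul_comm] using this
  have hsub : ∀ u : ℝ, 0 < u → HasDerivAt φ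
      (Real.cosh (Real.sqrt u) * (1 / (2 * Real.sqrt u)) * (2 * Real.sqrt u)⁻¹
        + Real.sinh (Real.sqrt u) * (-(2 * (1 / (2 * Real.sqrt u))) / (2 * Real.sqrt u) ^ 2)) u := by
    intro u hu
    have hsq : (0:ℝ) < Real.sqrt u := Real.sqrt_pos.mpr hu
    have hs : HasDerivAt Real.sqrt (1 / (2 * Real.sqrt u)) u := Real.hasDerivAt_sqrt hu.ne'
    have hsinh : HasDerivAt (fun v => Real.sinh (Real.sqrt v))
        (Real.cosh (Real.sqrt u) * (1 / (2 * Real.sqrt u))) u :=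
      (Real.hasDerivAt_sinh (Real.sqrt u)).comp u hs
    have hmul : HasDerivAt (fun v => 2 * Real.sqrt v) (2 * (1 / (2 * Real.sqrt u))) u :=
      hs.const_mul 2
    have hinv := hmul.inv (by positivity)
    exact hsinh.mul hinv
  have hψnonneg : ∀ u : ℝ, 0 < u →
      0 ≤ Real.cosh (Real.sqrt u) * (1 / (2 * Real.sqrt u)) * (2 * Real.sqrt u)⁻¹
        + Real.sinh (Real.sqrt u) * (-(2 * (1 / (2 * Real.sqrt u))) / (2 * Real.sqrt u) ^ 2) := by
    intro u hu
    have hsq : (0:ℝ) < Real.sqrt u := Real.sqrt_pos.mpr hu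
    have key := aux_sinh_le_mul_cosh hsq.le
    set s := Real.sqrt u
    have heq : Real.cosh s * (1/(2*s)) * (2*s)⁻¹ + Real.sinh s * (-(2*(1/(2*s))) / (2*s)^2)
        = (s * Real.cosh s - Real.sinh s) * ((2*s)⁻¹ * (2*s)⁻¹ * s⁻¹) := by
      field_simp
      ring
    rw [heq]
    have : (0:ℝ) ≤ s * Real.cosh s - Real.sinh s := by linarith
    positivity
  have hmemIoi : interior (Set.Ici (0:ℝ)) = Set.Ioi 0 := interior_Ici
  have hEq : ∀ u ∈ Set.Ioi (0:ℝ), deriv h u = φ u := fun u hu => (hderiv u hu).deriv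
  apply convexOn_of_deriv2_nonneg (convex_Ici 0)
  · exact (Real.continuous_cosh.comp Real.continuous_sqrt).continuousOn
  · rw [hmemIoi]; exact fun u hu => (hderiv u hu).differentiableAt.differentiableWithinAt
  · rw [hmemIoi]
    intro u hu
    have hev : deriv h =ᶠ[nhds u] φ :=
      Filter.eventuallyEq_of_mem (isOpen_Ioi.mem_nhds hu) hEq
    exact ((hsub u hu).differentiableAt.congr_of_eventuallyEq hev).differentiableWithinAt
  · rw [hmemIoi]
    intro u hu
    have hev : deriv h =ᶠ[nhds u] φ :=
      Filter.eventuallyEq_of_mem (isOpen_Ioi.mem_nhds hu) hEq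
    have : deriv^[2] h u = deriv φ u := by
      simp only [Function.iterate_succ, Function.iterate_zero, Function.comp_apply, id]
      exact hev.deriv_eq
    rw [this, (hsub u hu).deriv]
    exact hψnonneg u hu

noncomputable def wt (l N R : ℝ) : ℝ :=
  if N * R = 0 then 0 else (Real.cosh (l*(N+R)) - Real.cosh (l*(N-R))) / (2*(N*R))

lemma aux_chord {H : Type*} [NormedAddCommGroup H] [InnerProductSpace ℝ H]
    {l R : ℝ} (hl : 0 ≤ l) (hR : 0 ≤ R) (a x : H) (hx : ‖x‖ ≤ R) :
    Real.cosh (l * ‖a + x‖) ≤ Real.cosh (l * ‖a‖) * Real.cosh (l * R)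
      + wt l ‖a‖ R * (inner ℝ a x : ℝ) := by
  by_cases hK : ‖a‖ * R = 0
  · rw [wt, if_pos hK]
    rcases mul_eq_zero.mp hK with h1 | h1
    · have ha : a = 0 := norm_eq_zero.mp h1
      subst ha
      simp only [zero_add, norm_zero, mul_zero, Real.cosh_zero, one_mul,
        inner_zero_left, add_zero]
      exact Real.cosh_le_cosh.mpr (by
        rw [abs_of_nonneg (by positivity), abs_of_nonneg (by positivity)]
        exact mul_le_mul_of_nonneg_left hx hl)
    · have hx0 : x = 0 := norm_le_zero_iff.mp (hx.trans h1.le)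
      subst hx0
      simp [h1]
  · have hNpos : 0 < ‖a‖ := by
      rcases (mul_ne_zero_iff.mp hK) with ⟨h1, _⟩
      exact lt_of_le_of_ne (norm_nonneg a) (Ne.symm h1)
    have hRpos : 0 < R := by
      rcases (mul_ne_zero_iff.mp hK) with ⟨_, h2⟩
      exact lt_of_le_of_ne hR (Ne.symm h2)
    set N := ‖a‖ with hN
    set c : ℝ := (inner ℝ a x : ℝ) with hc
    have hKpos : 0 < N * R := mul_pos hNpos hRpos
    have hcK : |c| ≤ N * R := by
      calc |c| ≤ ‖a‖ * ‖x‖ := abs_real_inner_le_norm a x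
        _ ≤ N * R := mul_le_mul_of_nonneg_left hx (norm_nonneg a)
    have hcK1 := (abs_le.mp hcK).1
    have hcK2 := (abs_le.mp hcK).2
    set t : ℝ := (N * R + c) / (2 * (N * R)) with ht
    have ht0 : 0 ≤ t := div_nonneg (by linarith) (by positivity)
    have ht1' : 0 ≤ 1 - t := by
      rw [ht, sub_nonneg, div_le_one (by positivity)]
      linarith
    have hsq : ‖a + x‖^2 ≤ N^2 + 2*c + R^2 := by
      rw [norm_add_sq_real]
      have h1 : ‖x‖^2 ≤ R^2 := sq_le_sq' (by linarith [norm_nonneg x]) hx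
      have h2 : (inner ℝ a x : ℝ) = c := rfl
      have h3 : ‖a‖ = N := rfl
      rw [h2, h3]
      linarith
    have hcomb : (1-t) * (l*(N-R))^2 + t * (l*(N+R))^2 = l^2 * (N^2 + 2*c + R^2) := by
      rw [ht]
      field_simp
      ring
    have hconv := aux_convexOn_cosh_sqrt.2 (Set.mem_Ici.mpr (sq_nonneg (l*(N-R))))
      (Set.mem_Ici.mpr (sq_nonneg (l*(N+R)))) ht1' ht0 (by ring)
    simp only [smul_eq_mul] at hconv
    rw [hcomb] at hconv
    have hmono : Real.cosh (l * ‖a+x‖) ≤ Real.cosh (Real.sqrt (l^2 * (N^2 + 2*c + R^2))) := by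
      apply Real.cosh_le_cosh.mpr
      rw [abs_of_nonneg (by positivity), abs_of_nonneg (Real.sqrt_nonneg _)]
      rw [show l * ‖a+x‖ = Real.sqrt ((l * ‖a+x‖)^2) from (Real.sqrt_sq (by positivity)).symm]
      apply Real.sqrt_le_sqrt
      rw [mul_pow]
      exact mul_le_mul_of_nonneg_left hsq (sq_nonneg l)
    rw [Real.sqrt_sq_eq_abs, Real.sqrt_sq_eq_abs, Real.cosh_abs, Real.cosh_abs] at hconv
    have hfinal : (1-t) * Real.cosh (l*(N-R)) + t * Real.cosh (l*(N+R))
        = Real.cosh (l*N) * Real.cosh (l*R) + wt l N R * c := by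
      rw [wt, if_neg hK, ht]
      have hcadd : Real.cosh (l*(N+R)) = Real.cosh (l*N) * Real.cosh (l*R)
          + Real.sinh (l*N) * Real.sinh (l*R) := by
        rw [mul_add]; exact Real.cosh_add _ _
      have hcsub : Real.cosh (l*(N-R)) = Real.cosh (l*N) * Real.cosh (l*R)
          - Real.sinh (l*N) * Real.sinh (l*R) := by
        rw [mul_sub]; exact Real.cosh_sub _ _
      rw [hcadd, hcsub]
      field_simp
      ring
    calc Real.cosh (l * ‖a + x‖) ≤ Real.cosh (Real.sqrt (l^2 * (N^2 + 2*c + R^2))) := hmono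
      _ ≤ (1-t) * Real.cosh (l*(N-R)) + t * Real.cosh (l*(N+R)) := hconv
      _ = Real.cosh (l*N) * Real.cosh (l*R) + wt l N R * c := hfinal

open MeasureTheory in
lemma aux_integral_inner_simple {Ω : Type*} {m m0 : MeasurableSpace Ω} (hm : m ≤ m0)
    {P : Measure Ω} [IsFiniteMeasure P]
    {H : Type*} [NormedAddCommGroup H] [InnerProductSpace ℝ H] [CompleteSpace H]
    {X : Ω → H} (hX : Integrable X P) (hcond : P[X | m] =ᵐ[P] 0)
    (φ : @SimpleFunc Ω m H) :
    ∫ ω, (inner ℝ (φ ω) (X ω) : ℝ) ∂P = 0 := by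
  haveI : IsFiniteMeasure (P.trim hm) := isFiniteMeasure_trim hm
  haveI : SigmaFinite (P.trim hm) := inferInstance
  have hint : ∀ ψ : @SimpleFunc Ω m H, Integrable (fun ω => (inner ℝ (ψ ω) (X ω) : ℝ)) P := by
    intro ψ
    obtain ⟨C, hC⟩ := @SimpleFunc.exists_forall_le Ω ℝ m _ _ _ (@SimpleFunc.map Ω H ℝ m norm ψ)
    refine Integrable.mono (hX.norm.const_mul C) ?_ ?_
    · exact AEStronglyMeasurable.inner
        ((ψ.stronglyMeasurable.mono hm).aestronglyMeasurable) hX.aestronglyMeasurable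
    · filter_upwards with ω
      simp only [Real.norm_eq_abs]
      calc |(inner ℝ (ψ ω) (X ω) : ℝ)| ≤ ‖ψ ω‖ * ‖X ω‖ := abs_real_inner_le_norm _ _
        _ ≤ C * ‖X ω‖ := by
            have := hC ω
            simp only [SimpleFunc.map_apply] at this
            exact mul_le_mul_of_nonneg_right this (norm_nonneg _)
        _ ≤ |C * ‖X ω‖| := le_abs_self _
  classical
  induction φ using SimpleFunc.induction with
  | @const c s hs =>
    have hset : ∫ ω in s, X ω ∂P = 0 := by
      rw [← setIntegral_condExp hm hX hs]
      rw [setIntegral_congr_ae (hm s hs) (hcond.mono fun ω hω => fun _ => hω)]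
      simp
    simp only [SimpleFunc.coe_piecewise, SimpleFunc.coe_const, SimpleFunc.coe_zero]
    have heq : (fun ω => (inner ℝ (s.piecewise (Function.const Ω c) (Function.const Ω 0) ω) (X ω) : ℝ))
        = s.indicator (fun ω => (inner ℝ c (X ω) : ℝ)) := by
      ext ω
      by_cases hω : ω ∈ s
      · simp [Set.piecewise_eq_of_mem _ _ _ hω, Set.indicator_of_mem hω]
      · simp [Set.piecewise_eq_of_notMem _ _ _ hω, Set.indicator_of_notMem hω]
    rw [heq, integral_indicator (hm s hs)]
    rw [integral_inner hX.integrableOn c, hset, inner_zero_right]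
  | @add φ ψ hdisj hφ hψ =>
    have hadd := integral_add (hint φ) (hint ψ)
    rw [hφ, hψ, add_zero] at hadd
    rw [← hadd]
    congr 1
    ext ω
    simp [inner_add_left]

open MeasureTheory in
lemma aux_integral_inner_zero {Ω : Type*} {m m0 : MeasurableSpace Ω} (hm : m ≤ m0)
    {P : Measure Ω} [IsFiniteMeasure P]
    {H : Type*} [NormedAddCommGroup H] [InnerProductSpace ℝ H] [CompleteSpace H]
    {X Y : Ω → H} (hX : Integrable X P) (hcond : P[X | m] =ᵐ[P] 0)
    (hY : StronglyMeasurable[m] Y) {C : ℝ} (hC : 0 ≤ C) (hYb : ∀ ω, ‖Y ω‖ ≤ C) :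
    ∫ ω, (inner ℝ (Y ω) (X ω) : ℝ) ∂P = 0 := by
  set φ := hY.approxBounded C with hφ
  have htend : ∀ ω, Filter.Tendsto (fun n => (inner ℝ (φ n ω) (X ω) : ℝ))
      Filter.atTop (nhds (inner ℝ (Y ω) (X ω) : ℝ)) := by
    intro ω
    have h1 := hY.tendsto_approxBounded_of_norm_le (hYb ω)
    have h2 : Continuous fun v : H => (inner ℝ v (X ω) : ℝ) :=
      continuous_inner.comp (continuous_id.prodMk continuous_const)
    exact (h2.tendsto _).comp h1
  have hbound : ∀ n, ∀ᵐ ω ∂P, ‖(inner ℝ (φ n ω) (X ω) : ℝ)‖ ≤ C * ‖X ω‖ := by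
    intro n
    filter_upwards with ω
    rw [Real.norm_eq_abs]
    calc |(inner ℝ (φ n ω) (X ω) : ℝ)| ≤ ‖φ n ω‖ * ‖X ω‖ := abs_real_inner_le_norm _ _
      _ ≤ C * ‖X ω‖ :=
          mul_le_mul_of_nonneg_right (hY.norm_approxBounded_le hC n ω) (norm_nonneg _)
  have hmeas : ∀ n, AEStronglyMeasurable (fun ω => (inner ℝ (φ n ω) (X ω) : ℝ)) P :=
    fun n => AEStronglyMeasurable.inner
      (((φ n).stronglyMeasurable.mono hm).aestronglyMeasurable) hX.aestronglyMeasurable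
  have hlim := tendsto_integral_of_dominated_convergence (fun ω => C * ‖X ω‖) hmeas
    (hX.norm.const_mul C) hbound
    (Filter.Eventually.of_forall fun ω => htend ω)
  have hzero : ∀ n, ∫ ω, (inner ℝ (φ n ω) (X ω) : ℝ) ∂P = 0 := fun n =>
    aux_integral_inner_simple hm hX hcond (φ n)
  have h0 : Filter.Tendsto (fun _ : ℕ => (0:ℝ)) Filter.atTop
      (nhds (∫ ω, (inner ℝ (Y ω) (X ω) : ℝ) ∂P)) := by
    simpa [hzero] using hlim
  exact (tendsto_nhds_unique tendsto_const_nhds h0).symm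

/-- High-probability bound (Azuma-type) for the norm of partial sums of a
bounded Hilbert-space-valued martingale difference sequence. -/
theorem stmt_8 {Ω : Type*} {m0 : MeasurableSpace Ω} {P : Measure Ω} [IsProbabilityMeasure P]
    {H : Type*} [NormedAddCommGroup H] [InnerProductSpace ℝ H] [CompleteSpace H]
    (T : ℕ) (hT : 1 ≤ T)
    (ℱ : Filtration ℕ m0) (hF0 : ℱ 0 = ⊥)
    (X : ℕ → Ω → H)
    (hadapt : ∀ t, 1 ≤ t → t ≤ T → StronglyMeasurable[ℱ t] (X t))
    (hint : ∀ t, 1 ≤ t → t ≤ T → Integrable (X t) P)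
    (hmds : ∀ t, 1 ≤ t → t ≤ T → P[X t | ℱ (t - 1)] =ᵐ[P] 0)
    (R : ℕ → ℝ) (hR : ∀ t, 0 ≤ R t)
    (hbd : ∀ t, 1 ≤ t → t ≤ T → ∀ᵐ ω ∂P, ‖X t ω‖ ≤ R t)
    (δ : ℝ) (hδ : δ ∈ Set.Ioo (0 : ℝ) 1)
    (t : ℕ) (ht1 : 1 ≤ t) (htT : t ≤ T) :
    ENNReal.ofReal (1 - δ) ≤
      P {ω | ‖∑ s ∈ Finset.Icc 1 t, X s ω‖ ≤
        4 * Real.sqrt (Real.log (2 / δ) * ∑ s ∈ Finset.Icc 1 T, R s ^ 2)} := by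
  classical
  obtain ⟨hδ0, hδ1⟩ := hδ
  set L : ℝ := Real.log (2 / δ) with hLdef
  set V : ℝ := ∑ s ∈ Finset.Icc 1 T, R s ^ 2 with hVdef
  set a : ℝ := 4 * Real.sqrt (L * V) with hadef
  have hL : 0 < L := Real.log_pos (by rw [lt_div_iff₀ hδ0]; linarith)
  have hV0 : 0 ≤ V := Finset.sum_nonneg fun s _ => sq_nonneg _
  have ha0 : 0 ≤ a := by positivity
  by_cases hVzero : V = 0
  · -- degenerate case: all R s vanish
    have hRz : ∀ s ∈ Finset.Icc 1 T, R s = 0 := by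
      intro s hsmem
      have h2 := (Finset.sum_eq_zero_iff_of_nonneg (fun i _ => sq_nonneg (R i))).mp
        hVzero s hsmem
      exact pow_eq_zero_iff (n := 2) (by norm_num) |>.mp h2
    have hXz : ∀ᵐ ω ∂P, ∀ s ∈ Finset.Icc 1 t, X s ω = 0 := by
      rw [Filter.eventually_all_finset]
      intro s hs
      have hs1 : 1 ≤ s := (Finset.mem_Icc.mp hs).1
      have hs2 : s ≤ T := le_trans (Finset.mem_Icc.mp hs).2 htT
      filter_upwards [hbd s hs1 hs2] with ω hω
      have hz : R s = 0 := hRz s (Finset.mem_Icc.mpr ⟨hs1, hs2⟩)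
      rw [hz] at hω
      exact norm_le_zero_iff.mp hω
    have hsub : ∀ᵐ ω ∂P, ω ∈ {ω | ‖∑ s ∈ Finset.Icc 1 t, X s ω‖ ≤ a} := by
      filter_upwards [hXz] with ω hω
      have hzero : ∑ s ∈ Finset.Icc 1 t, X s ω = 0 := Finset.sum_eq_zero hω
      simp only [Set.mem_setOf_eq, hzero, norm_zero]
      exact ha0
    calc ENNReal.ofReal (1 - δ) ≤ 1 := by
          apply ENNReal.ofReal_le_one.mpr; linarith
      _ = P Set.univ := measure_univ.symm
      _ ≤ P {ω | ‖∑ s ∈ Finset.Icc 1 t, X s ω‖ ≤ a} :=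
          measure_mono_ae (hsub.mono fun ω h _ => h)
  · -- main case : V > 0
    have hVpos : 0 < V := lt_of_le_of_ne hV0 (Ne.symm hVzero)
    have hsqpos : 0 < Real.sqrt (L * V) := Real.sqrt_pos.mpr (mul_pos hL hVpos)
    have hapos : 0 < a := by rw [hadef]; positivity
    set l : ℝ := a / V with hldef
    have hlpos : 0 < l := div_pos hapos hVpos
    set B : ℝ := ∑ s ∈ Finset.Icc 1 T, R s with hBdef
    have hB0 : 0 ≤ B := Finset.sum_nonneg fun s _ => hR s
    set S : ℕ → Ω → H := fun n ω => ∑ s ∈ Finset.Icc 1 n, X s ω with hSdef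
    have hgood : ∀ᵐ ω ∂P, ∀ s ∈ Finset.Icc 1 T, ‖X s ω‖ ≤ R s := by
      rw [Filter.eventually_all_finset]
      intro s hs
      exact hbd s (Finset.mem_Icc.mp hs).1 (Finset.mem_Icc.mp hs).2
    have hSbd : ∀ n, n ≤ T → ∀ᵐ ω ∂P, ‖S n ω‖ ≤ B := by
      intro n hn
      filter_upwards [hgood] with ω hω
      calc ‖S n ω‖ ≤ ∑ s ∈ Finset.Icc 1 n, ‖X s ω‖ := norm_sum_le _ _
        _ ≤ ∑ s ∈ Finset.Icc 1 n, R s := by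
            apply Finset.sum_le_sum
            intro s hs
            exact hω s (Finset.mem_Icc.mpr ⟨(Finset.mem_Icc.mp hs).1,
              le_trans (Finset.mem_Icc.mp hs).2 hn⟩)
        _ ≤ B := by
            apply Finset.sum_le_sum_of_subset_of_nonneg
              (Finset.Icc_subset_Icc_right hn)
            exact fun s _ _ => hR s
    have hSmeas : ∀ n, n ≤ T → StronglyMeasurable[ℱ n] (S n) := by
      intro n hn
      apply Finset.stronglyMeasurable_fun_sum
      intro s hs
      exact (hadapt s (Finset.mem_Icc.mp hs).1
        (le_trans (Finset.mem_Icc.mp hs).2 hn)).mono (ℱ.mono (Finset.mem_Icc.mp hs).2)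
    have hSmeas0 : ∀ n, n ≤ T → StronglyMeasurable[m0] (S n) :=
      fun n hn => (hSmeas n hn).mono (ℱ.le n)
    set f : ℕ → Ω → ℝ := fun n ω => Real.cosh (l * ‖S n ω‖) with hfdef
    have hfmeas : ∀ n, n ≤ T → StronglyMeasurable[m0] (f n) := by
      intro n hn
      exact Real.continuous_cosh.comp_stronglyMeasurable
        (((hSmeas0 n hn).norm).const_mul l)
    have hfint : ∀ n, n ≤ T → Integrable (f n) P := by
      intro n hn
      refine Integrable.mono' (integrable_const (Real.cosh (l * B)))
        (hfmeas n hn).aestronglyMeasurable ?_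
      filter_upwards [hSbd n hn] with ω hω
      rw [Real.norm_eq_abs, abs_of_nonneg ((Real.cosh_pos _).le)]
      apply Real.cosh_le_cosh.mpr
      rw [abs_of_nonneg (by positivity), abs_of_nonneg (by positivity)]
      exact mul_le_mul_of_nonneg_left hω hlpos.le
    have hkey : ∀ n, n ≤ t → ∫ ω, f n ω ∂P ≤ ∏ s ∈ Finset.Icc 1 n, Real.cosh (l * R s) := by
      intro n
      induction n with
      | zero =>
        intro _
        have h0 : Finset.Icc 1 0 = (∅ : Finset ℕ) := Finset.Icc_eq_empty (by norm_num)
        have hone : ∫ ω, f 0 ω ∂P = 1 := by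
          rw [hfdef]
          simp only [hSdef, h0, Finset.sum_empty, norm_zero, mul_zero, Real.cosh_zero]
          simp
        rw [hone, h0, Finset.prod_empty]
      | succ n ihn =>
        intro hn1
        have hnt : n ≤ t := le_of_lt (Nat.lt_of_succ_le hn1)
        have ih := ihn hnt
        have hn1T : n + 1 ≤ T := le_trans hn1 htT
        have hnT : n ≤ T := le_trans (Nat.le_succ n) hn1T
        have h1n1 : 1 ≤ n + 1 := Nat.succ_le_succ (Nat.zero_le n)
        have hmds' : P[X (n+1) | ℱ n] =ᵐ[P] 0 := by
          have h := hmds (n+1) h1n1 hn1T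
          simpa using h
        have hXint := hint (n+1) h1n1 hn1T
        have hSsucc : ∀ ω, S (n+1) ω = S n ω + X (n+1) ω := by
          intro ω
          rw [hSdef]
          exact Finset.sum_Icc_succ_top h1n1 _
        by_cases hr0 : R (n+1) = 0
        · have hX0 : ∀ᵐ ω ∂P, X (n+1) ω = 0 := by
            filter_upwards [hbd (n+1) h1n1 hn1T] with ω hω
            rw [hr0] at hω
            exact norm_le_zero_iff.mp hω
          have hfeq : f (n+1) =ᵐ[P] f n := by
            filter_upwards [hX0] with ω hω
            rw [hfdef]
            simp only
            rw [hSsucc ω, hω, add_zero]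
          rw [integral_congr_ae hfeq]
          rw [Finset.prod_Icc_succ_top h1n1, hr0, mul_zero, Real.cosh_zero, mul_one]
          exact ih
        · have hrpos : 0 < R (n+1) := lt_of_le_of_ne (hR (n+1)) (Ne.symm hr0)
          set Rn : ℝ := R (n+1) with hRndef
          set Z : Ω → H := S n with hZdef
          set Y : Ω → H := fun ω => if ‖Z ω‖ ≤ B then wt l ‖Z ω‖ Rn • Z ω else 0 with hYdef
          set C : ℝ := Real.cosh (l * (B + Rn)) / Rn with hCdef
          have hC0 : 0 ≤ C := div_nonneg (Real.cosh_pos _).le hrpos.le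
          have hYb : ∀ ω, ‖Y ω‖ ≤ C := by
            intro ω
            rw [hYdef]
            simp only
            by_cases hωB : ‖Z ω‖ ≤ B
            · rw [if_pos hωB, norm_smul, Real.norm_eq_abs]
              by_cases hk : ‖Z ω‖ * Rn = 0
              · rw [wt, if_pos hk, abs_zero, zero_mul]
                exact hC0
              · have hNpos : 0 < ‖Z ω‖ := by
                  rcases mul_ne_zero_iff.mp hk with ⟨h1, _⟩
                  exact lt_of_le_of_ne (norm_nonneg _) (Ne.symm h1)
                have hcoshup : Real.cosh (l*(‖Z ω‖ - Rn)) ≤ Real.cosh (l*(‖Z ω‖ + Rn)) := by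
                  apply Real.cosh_le_cosh.mpr
                  rw [abs_mul, abs_mul]
                  apply mul_le_mul_of_nonneg_left _ (abs_nonneg l)
                  rw [abs_of_nonneg (by positivity : (0:ℝ) ≤ ‖Z ω‖ + Rn)]
                  exact abs_le.mpr ⟨by linarith, by linarith⟩
                have habs : |Real.cosh (l*(‖Z ω‖ + Rn)) - Real.cosh (l*(‖Z ω‖ - Rn))|
                    ≤ Real.cosh (l*(‖Z ω‖ + Rn)) := by
                  rw [abs_of_nonneg (by linarith)]
                  have hcm := Real.one_le_cosh (l*(‖Z ω‖ - Rn))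
                  linarith
                have heq : |wt l ‖Z ω‖ Rn| * ‖Z ω‖
                    = |Real.cosh (l*(‖Z ω‖ + Rn)) - Real.cosh (l*(‖Z ω‖ - Rn))| / (2*Rn) := by
                  rw [wt, if_neg hk, abs_div,
                    abs_of_pos (by positivity : (0:ℝ) < 2*(‖Z ω‖*Rn))]
                  field_simp
                rw [heq]
                have hcoshB : Real.cosh (l*(‖Z ω‖ + Rn)) ≤ Real.cosh (l*(B + Rn)) := by
                  apply Real.cosh_le_cosh.mpr
                  rw [abs_mul, abs_mul]
                  apply mul_le_mul_of_nonneg_left _ (abs_nonneg l)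
                  rw [abs_of_nonneg (by positivity : (0:ℝ) ≤ ‖Z ω‖ + Rn),
                    abs_of_nonneg (by positivity : (0:ℝ) ≤ B + Rn)]
                  linarith
                calc |Real.cosh (l*(‖Z ω‖ + Rn)) - Real.cosh (l*(‖Z ω‖ - Rn))| / (2*Rn)
                    ≤ Real.cosh (l*(B + Rn)) / (2*Rn) := by
                      apply div_le_div_of_nonneg_right ?_ (by positivity)
                      · exact le_trans habs hcoshB
                  _ ≤ Real.cosh (l*(B + Rn)) / Rn :=
                      div_le_div_of_nonneg_left (Real.cosh_pos _).le hrpos (by linarith)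
                  _ = C := by rw [hCdef]
            · rw [if_neg hωB, norm_zero]
              exact hC0
          have hZmeas : StronglyMeasurable[ℱ n] Z := hSmeas n hnT
          have hNmeas : Measurable[ℱ n] (fun ω => ‖Z ω‖) := hZmeas.norm.measurable
          have hwtmeas : StronglyMeasurable[ℱ n] (fun ω => wt l ‖Z ω‖ Rn) := by
            apply Measurable.stronglyMeasurable
            unfold wt
            apply Measurable.ite
            · exact measurableSet_eq_fun (hNmeas.mul_const Rn) measurable_const
            · exact measurable_const
            · exact ((Real.continuous_cosh.measurable.comp
                  (((hNmeas.add_const Rn).const_mul l)))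
                |>.sub (Real.continuous_cosh.measurable.comp
                  (((hNmeas.sub_const Rn).const_mul l)))).div
                ((hNmeas.mul_const Rn).const_mul 2)
          have hYmeas : StronglyMeasurable[ℱ n] Y := by
            rw [hYdef]
            exact StronglyMeasurable.ite (measurableSet_le hNmeas measurable_const)
              (hwtmeas.smul hZmeas) stronglyMeasurable_const
          have hchord : ∀ᵐ ω ∂P, f (n+1) ω ≤ f n ω * Real.cosh (l * Rn)
              + (inner ℝ (Y ω) (X (n+1) ω) : ℝ) := by
            filter_upwards [hbd (n+1) h1n1 hn1T, hSbd n hnT] with ω h1 h2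
            have hZB : ‖Z ω‖ ≤ B := h2
            rw [hfdef]
            simp only
            rw [hSsucc ω]
            have hch := aux_chord hlpos.le hrpos.le (Z ω) (X (n+1) ω) h1
            rw [hYdef]
            simp only [if_pos hZB]
            rw [real_inner_smul_left]
            exact hch
          have hinner0 : ∫ ω, (inner ℝ (Y ω) (X (n+1) ω) : ℝ) ∂P = 0 :=
            aux_integral_inner_zero (ℱ.le n) hXint hmds' hYmeas hC0 hYb
          have hinnerint : Integrable (fun ω => (inner ℝ (Y ω) (X (n+1) ω) : ℝ)) P := by
            refine Integrable.mono (hXint.norm.const_mul C)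
              (AEStronglyMeasurable.inner ((hYmeas.mono (ℱ.le n)).aestronglyMeasurable)
                hXint.aestronglyMeasurable) ?_
            filter_upwards with ω
            rw [Real.norm_eq_abs]
            calc |(inner ℝ (Y ω) (X (n+1) ω) : ℝ)| ≤ ‖Y ω‖ * ‖X (n+1) ω‖ :=
                  abs_real_inner_le_norm _ _
              _ ≤ C * ‖X (n+1) ω‖ := mul_le_mul_of_nonneg_right (hYb ω) (norm_nonneg _)
              _ ≤ |C * ‖X (n+1) ω‖| := le_abs_self _
          calc ∫ ω, f (n+1) ω ∂P
              ≤ ∫ ω, (f n ω * Real.cosh (l*Rn) + (inner ℝ (Y ω) (X (n+1) ω) : ℝ)) ∂P :=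
                integral_mono_ae (hfint (n+1) hn1T)
                  (((hfint n hnT).mul_const _).add hinnerint) hchord
            _ = (∫ ω, f n ω ∂P) * Real.cosh (l*Rn)
                + ∫ ω, (inner ℝ (Y ω) (X (n+1) ω) : ℝ) ∂P := by
                rw [integral_add ((hfint n hnT).mul_const _) hinnerint, integral_mul_const]
            _ = (∫ ω, f n ω ∂P) * Real.cosh (l*Rn) := by rw [hinner0, add_zero]
            _ ≤ (∏ s ∈ Finset.Icc 1 n, Real.cosh (l*R s)) * Real.cosh (l*Rn) :=
                mul_le_mul_of_nonneg_right ih (Real.cosh_pos _).le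
            _ = ∏ s ∈ Finset.Icc 1 (n+1), Real.cosh (l*R s) :=
                (Finset.prod_Icc_succ_top h1n1 _).symm
    -- final assembly
    have hIbound : ∫ ω, f t ω ∂P ≤ Real.exp (l^2 * V / 2) := by
      refine le_trans (hkey t le_rfl) ?_
      calc ∏ s ∈ Finset.Icc 1 t, Real.cosh (l * R s)
          ≤ ∏ s ∈ Finset.Icc 1 t, Real.exp ((l * R s)^2 / 2) := by
            apply Finset.prod_le_prod
            · exact fun s _ => (Real.cosh_pos _).le
            · exact fun s _ => aux_cosh_le_exp_half_sq _
        _ = Real.exp (∑ s ∈ Finset.Icc 1 t, (l * R s)^2 / 2) := (Real.exp_sum _ _).symm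
        _ ≤ Real.exp (l^2 * V / 2) := by
            apply Real.exp_le_exp.mpr
            have hsub : ∑ s ∈ Finset.Icc 1 t, (l * R s)^2/2
                ≤ ∑ s ∈ Finset.Icc 1 T, (l * R s)^2/2 := by
              apply Finset.sum_le_sum_of_subset_of_nonneg
                (Finset.Icc_subset_Icc_right htT)
              exact fun s _ _ => by positivity
            refine le_trans hsub (le_of_eq ?_)
            rw [hVdef, Finset.mul_sum, Finset.sum_div]
            apply Finset.sum_congr rfl
            intro s _
            ring
    clear_value L V a l B
    have hGmeas : MeasurableSet {ω | ‖S t ω‖ ≤ a} := by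
      exact measurableSet_le ((hSmeas0 t htT).norm.measurable) measurable_const
    have hcompl : {ω | ‖S t ω‖ ≤ a}ᶜ = {ω | a < ‖S t ω‖} := by
      ext ω
      simp [not_le]
    have hsubbad : {ω | a < ‖S t ω‖} ⊆ {ω | Real.cosh (l * a) ≤ f t ω} := by
      intro ω hω
      simp only [Set.mem_setOf_eq] at hω ⊢
      apply Real.cosh_le_cosh.mpr
      rw [abs_of_nonneg (by positivity), abs_of_nonneg (by positivity)]
      exact mul_le_mul_of_nonneg_left hω.le hlpos.le
    have hmark := mul_meas_ge_le_integral_of_nonneg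
      (f := f t) (μ := P) (Filter.Eventually.of_forall fun ω => (Real.cosh_pos _).le)
      (hfint t htT) (Real.cosh (l * a))
    have hcoshpos : 0 < Real.cosh (l * a) := Real.cosh_pos _
    have hPbadReal : (P {ω | a < ‖S t ω‖}).toReal ≤ δ := by
      have h1 : (P {ω | a < ‖S t ω‖}).toReal
          ≤ (P {ω | Real.cosh (l * a) ≤ f t ω}).toReal := by
        apply ENNReal.toReal_mono (measure_ne_top P _)
        exact measure_mono hsubbad
      have h2 : (P {ω | Real.cosh (l * a) ≤ f t ω}).toReal
          ≤ Real.exp (l^2 * V / 2) / Real.cosh (l * a) := by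
        rw [le_div_iff₀ hcoshpos]
        calc (P {ω | Real.cosh (l*a) ≤ f t ω}).toReal * Real.cosh (l*a)
            = Real.cosh (l*a) * (P {ω | Real.cosh (l*a) ≤ f t ω}).toReal := by ring
          _ ≤ ∫ ω, f t ω ∂P := hmark
          _ ≤ Real.exp (l^2 * V / 2) := hIbound
      have h3 : Real.exp (l^2 * V / 2) / Real.cosh (l * a) ≤ 2 * Real.exp (l^2*V/2 - l*a) := by
        have hge : Real.exp (l * a) / 2 ≤ Real.cosh (l * a) := by
          rw [Real.cosh_eq]
          have : 0 < Real.exp (-(l*a)) := Real.exp_pos _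
          linarith
        calc Real.exp (l^2*V/2) / Real.cosh (l*a)
            ≤ Real.exp (l^2*V/2) / (Real.exp (l*a)/2) :=
              div_le_div_of_nonneg_left (Real.exp_pos _).le (by positivity) hge
          _ = 2 * Real.exp (l^2*V/2 - l*a) := by
              rw [Real.exp_sub]
              field_simp
      have ha2 : a^2 = 16 * (L*V) := by
        rw [hadef, mul_pow, Real.sq_sqrt (mul_nonneg hL.le hV0)]
        norm_num
      have h4 : l^2*V/2 - l*a = -(8*L) := by
        have e1 : l^2*V/2 - l*a = -(a^2/(2*V)) := by
          rw [hldef]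
          field_simp
          ring
        have e2 : a^2/(2*V) = 8*L := by
          rw [ha2]
          field_simp
          ring
        rw [e1, e2]
      have h5 : 2 * Real.exp (-(8*L)) ≤ δ := by
        have hexp : Real.exp (-L) = δ / 2 := by
          rw [Real.exp_neg, hLdef, Real.exp_log (by positivity)]
          rw [inv_div]
        have h8 : Real.exp (-(8*L)) = (δ/2)^8 := by
          rw [show -(8*L) = (8:ℕ) * (-L) by push_cast; ring, Real.exp_nat_mul, hexp]
        rw [h8]
        have hd2 : 0 ≤ δ/2 := by linarith
        have hd2' : δ/2 ≤ 1 := by linarith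
        have := pow_le_pow_of_le_one hd2 hd2' (by norm_num : 1 ≤ 8)
        rw [pow_one] at this
        linarith
      calc (P {ω | a < ‖S t ω‖}).toReal ≤ Real.exp (l^2*V/2) / Real.cosh (l*a) :=
            le_trans h1 h2
        _ ≤ 2 * Real.exp (l^2*V/2 - l*a) := h3
        _ = 2 * Real.exp (-(8*L)) := by rw [h4]
        _ ≤ δ := h5
    have hPbad : P {ω | ‖S t ω‖ ≤ a}ᶜ ≤ ENNReal.ofReal δ := by
      rw [hcompl]
      rw [← ENNReal.ofReal_toReal (measure_ne_top P {ω | a < ‖S t ω‖})]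
      exact ENNReal.ofReal_le_ofReal hPbadReal
    have hfinal : ENNReal.ofReal (1 - δ) ≤ P {ω | ‖S t ω‖ ≤ a} := by
      have hcc : P {ω | ‖S t ω‖ ≤ a} = 1 - P {ω | ‖S t ω‖ ≤ a}ᶜ := by
        have h := prob_compl_eq_one_sub (μ := P) hGmeas.compl
        rwa [compl_compl] at h
      rw [hcc]
      calc ENNReal.ofReal (1 - δ) = ENNReal.ofReal 1 - ENNReal.ofReal δ :=
            ENNReal.ofReal_sub 1 hδ0.le
        _ = 1 - ENNReal.ofReal δ := by rw [ENNReal.ofReal_one]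
        _ ≤ 1 - P {ω | ‖S t ω‖ ≤ a}ᶜ := tsub_le_tsub_left hPbad 1
    exact hfinal
end

section
/- Let E be a finite-dimensional real inner product space with Euclidean norm ‖·‖₂, and let ‖·‖ be a norm on E with dual norm ‖·‖_* and constants 0 < C₁ ≤ 1 ≤ C₂ such that C₁·‖A‖_* ≤ ‖A‖₂ ≤ C₂·‖A‖_* for all A ∈ E. On a filtered probability space, let (ε_t)_{t≥1} be E-valued with ε_t ℱ_t-measurable, 𝔼[ε_t | ℱ_{t−1}] = 0, and ‖ε_t‖_* ≤ σ̄ almost surely for every t. Fix β₁ ∈ [0,1), T ≥ 1, δ ∈ (0,1). Then with probability at least 1 − δ, for all 1 ≤ t ≤ T: ‖Σ_{τ=0}^{t−1} β₁^τ·ε_{t−τ}‖_* ≤ (4·C₂·σ̄/C₁)·√( log(2T/δ)/(1−β₁) ). -/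
open MeasureTheory
open scoped RealInnerProductSpace

section AuxAnalysis

lemma cosh_sqrt_hasSum {z : ℝ} (hz : 0 ≤ z) :
    HasSum (fun n => z ^ n / (Nat.factorial (2 * n) : ℝ)) (Real.cosh (Real.sqrt z)) := by
  have h := Real.hasSum_cosh (Real.sqrt z)
  simpa only [pow_mul, Real.sq_sqrt hz] using h

lemma cosh_sqrt_combo {x y t : ℝ} (hx : 0 ≤ x) (hy : 0 ≤ y) (ht0 : 0 ≤ t) (ht1 : t ≤ 1) :
    Real.cosh (Real.sqrt (t * x + (1 - t) * y))
      ≤ t * Real.cosh (Real.sqrt x) + (1 - t) * Real.cosh (Real.sqrt y) := by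
  have ht1' : (0:ℝ) ≤ 1 - t := by linarith
  have hz : 0 ≤ t * x + (1 - t) * y := add_nonneg (mul_nonneg ht0 hx) (mul_nonneg ht1' hy)
  refine hasSum_le (fun n => ?_) (cosh_sqrt_hasSum hz)
    (((cosh_sqrt_hasSum hx).mul_left t).add ((cosh_sqrt_hasSum hy).mul_left (1 - t)))
  have hpow : (t * x + (1 - t) * y) ^ n ≤ t * x ^ n + (1 - t) * y ^ n := by
    have h := (convexOn_pow (𝕜 := ℝ) n).2 (Set.mem_Ici.2 hx) (Set.mem_Ici.2 hy) ht0 ht1'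
      (by ring)
    simpa using h
  have hfac : (0:ℝ) < (Nat.factorial (2*n) : ℝ) := by positivity
  calc (t * x + (1 - t) * y) ^ n / (Nat.factorial (2 * n) : ℝ)
      ≤ (t * x ^ n + (1 - t) * y ^ n) / (Nat.factorial (2 * n) : ℝ) := by gcongr
    _ = t * (x ^ n / (Nat.factorial (2 * n) : ℝ))
        + (1 - t) * (y ^ n / (Nat.factorial (2 * n) : ℝ)) := by ring

lemma cosh_norm_add_le {E : Type*} [NormedAddCommGroup E] [InnerProductSpace ℝ E]
    (x y : E) (lam c : ℝ) (hlam : 0 ≤ lam) (hy : ‖y‖ ≤ c) :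
    Real.cosh (lam * ‖x + y‖) ≤ Real.cosh (lam * ‖x‖) * Real.cosh (lam * c)
      + Real.sinh (lam * ‖x‖) * Real.sinh (lam * c) / (‖x‖ * c) * ⟪x, y⟫ := by
  have hc0 : 0 ≤ c := (norm_nonneg y).trans hy
  rcases eq_or_ne x 0 with hx | hx
  · subst hx
    simp only [norm_zero, mul_zero, Real.sinh_zero, Real.cosh_zero, one_mul, zero_mul,
      zero_add, inner_zero_left, zero_div, mul_zero, add_zero]
    refine Real.cosh_le_cosh.2 ?_
    rw [abs_of_nonneg (by positivity), abs_of_nonneg (by positivity)]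
    exact mul_le_mul_of_nonneg_left hy hlam
  rcases eq_or_lt_of_le hc0 with hc | hc
  · have hy0 : y = 0 := norm_le_zero_iff.1 (hy.trans hc.symm.le)
    subst hy0
    simp [← hc]
  have ha : (0:ℝ) < ‖x‖ := norm_pos_iff.2 hx
  have hp : |(⟪x, y⟫ : ℝ)| ≤ ‖x‖ * c :=
    (abs_real_inner_le_norm x y).trans (mul_le_mul_of_nonneg_left hy (norm_nonneg x))
  obtain ⟨hpl, hpu⟩ := abs_le.1 hp
  have hac : (0:ℝ) < ‖x‖ * c := mul_pos ha hc
  set t : ℝ := (‖x‖ * c + ⟪x, y⟫) / (2 * (‖x‖ * c)) with htdef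
  have ht0 : 0 ≤ t := div_nonneg (by linarith) (by linarith)
  have ht1 : t ≤ 1 := by rw [div_le_one (by linarith)]; linarith
  have h1mt : 1 - t = (‖x‖ * c - ⟪x, y⟫) / (2 * (‖x‖ * c)) := by
    rw [htdef]; field_simp; ring
  have hy2 : ‖y‖ ^ 2 ≤ c ^ 2 := pow_le_pow_left₀ (norm_nonneg y) hy 2
  have hns : ‖x + y‖ ^ 2 ≤ ‖x‖ ^ 2 + 2 * ⟪x, y⟫ + c ^ 2 := by
    have h := norm_add_sq_real x y
    linarith
  have harg : (lam * ‖x + y‖) ^ 2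
      ≤ t * (lam * (‖x‖ + c)) ^ 2 + (1 - t) * (lam * (‖x‖ - c)) ^ 2 := by
    have hiden : t * (lam * (‖x‖ + c)) ^ 2 + (1 - t) * (lam * (‖x‖ - c)) ^ 2
        = lam ^ 2 * (‖x‖ ^ 2 + 2 * ⟪x, y⟫ + c ^ 2) := by
      rw [h1mt, htdef]; field_simp; ring
    rw [hiden, mul_pow]
    have h2 := mul_le_mul_of_nonneg_left hns (sq_nonneg lam)
    linarith
  have step1 : Real.cosh (lam * ‖x + y‖)
      ≤ Real.cosh (Real.sqrt (t * (lam * (‖x‖ + c)) ^ 2 + (1 - t) * (lam * (‖x‖ - c)) ^ 2)) := by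
    rw [← Real.sqrt_sq (by positivity : (0:ℝ) ≤ lam * ‖x + y‖)]
    refine Real.cosh_le_cosh.2 ?_
    rw [abs_of_nonneg (Real.sqrt_nonneg _), abs_of_nonneg (Real.sqrt_nonneg _)]
    exact Real.sqrt_le_sqrt harg
  have step2 := cosh_sqrt_combo (sq_nonneg (lam * (‖x‖ + c))) (sq_nonneg (lam * (‖x‖ - c))) ht0 ht1
  rw [Real.sqrt_sq_eq_abs, Real.sqrt_sq_eq_abs, Real.cosh_abs, Real.cosh_abs] at step2
  have step3 : t * Real.cosh (lam * (‖x‖ + c)) + (1 - t) * Real.cosh (lam * (‖x‖ - c))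
      = Real.cosh (lam * ‖x‖) * Real.cosh (lam * c)
        + Real.sinh (lam * ‖x‖) * Real.sinh (lam * c) / (‖x‖ * c) * ⟪x, y⟫ := by
    rw [mul_add lam, mul_sub lam, Real.cosh_add, Real.cosh_sub, h1mt, htdef]
    field_simp
    ring
  exact step1.trans (step2.trans (le_of_eq step3))

end AuxAnalysis

section AuxProbability

lemma integral_inner_eq_zero {Ω : Type*} {m0 : MeasurableSpace Ω} {P : Measure Ω}
    [IsProbabilityMeasure P] {E : Type*} [NormedAddCommGroup E] [InnerProductSpace ℝ E]
    [FiniteDimensional ℝ E] {m : MeasurableSpace Ω} (hm : m ≤ m0)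
    (Z D : Ω → E) (hZ : StronglyMeasurable[m] Z) (CZ : ℝ) (hZb : ∀ ω, ‖Z ω‖ ≤ CZ)
    (hD : Integrable D P) (hcond : P[D|m] =ᵐ[P] 0) :
    ∫ ω, (⟪Z ω, D ω⟫ : ℝ) ∂P = 0 := by
  classical
  haveI : SigmaFinite (P.trim hm) := by infer_instance
  set b := stdOrthonormalBasis ℝ E with hb
  have hfi_meas : ∀ i, StronglyMeasurable[m] (fun ω => (⟪Z ω, b i⟫ : ℝ)) :=
    fun i => hZ.inner stronglyMeasurable_const
  have hfi_bd : ∀ i ω, ‖(⟪Z ω, b i⟫ : ℝ)‖ ≤ CZ := by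
    intro i ω
    rw [Real.norm_eq_abs]
    refine (abs_real_inner_le_norm _ _).trans ?_
    have : ‖b i‖ = 1 := b.orthonormal.1 i
    rw [this, mul_one]
    exact hZb ω
  have hgi_int : ∀ i, Integrable (fun ω => (⟪b i, D ω⟫ : ℝ)) P := by
    intro i
    have := (innerSL ℝ (b i)).integrable_comp hD
    simpa using this
  have hint : ∀ i, Integrable (fun ω => (⟪Z ω, b i⟫ : ℝ) * (⟪b i, D ω⟫ : ℝ)) P := by
    intro i
    exact (hgi_int i).bdd_mul ((hfi_meas i).mono hm).aestronglyMeasurable (c := CZ)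
      (Filter.Eventually.of_forall (hfi_bd i))
  have hgcond : ∀ i, P[fun ω => (⟪b i, D ω⟫ : ℝ)|m] =ᵐ[P] 0 := by
    intro i
    refine (ae_eq_condExp_of_forall_setIntegral_eq hm (hgi_int i)
      (fun s _ _ => integrable_zero _ _ _)
      (fun s hs _ => ?_)
      aestronglyMeasurable_zero).symm
    have h1 : ∫ ω in s, (⟪b i, D ω⟫ : ℝ) ∂P = ⟪b i, ∫ ω in s, D ω ∂P⟫ :=
      integral_inner (Integrable.restrict hD) (b i)
    have h2 : ∫ ω in s, D ω ∂P = ∫ ω in s, (P[D|m]) ω ∂P :=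
      (setIntegral_condExp hm hD hs).symm
    have h3 : ∫ ω in s, (P[D|m]) ω ∂P = 0 := by
      rw [integral_congr_ae (ae_restrict_of_ae hcond)]
      simp
    simp only [Pi.zero_apply]
    rw [integral_zero, h1, h2, h3, inner_zero_right]
  have hzero : ∀ i, ∫ ω, (⟪Z ω, b i⟫ : ℝ) * (⟪b i, D ω⟫ : ℝ) ∂P = 0 := by
    intro i
    have hpull := condExp_stronglyMeasurable_mul_of_bound hm (hfi_meas i) (hgi_int i) CZ
      (Filter.Eventually.of_forall (hfi_bd i))
    have heq : (fun ω => (⟪Z ω, b i⟫ : ℝ) * (⟪b i, D ω⟫ : ℝ))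
        = (fun ω => (⟪Z ω, b i⟫ : ℝ)) * (fun ω => (⟪b i, D ω⟫ : ℝ)) := rfl
    rw [heq, ← integral_condExp hm]
    rw [integral_congr_ae hpull]
    have hz : (fun ω => (⟪Z ω, b i⟫ : ℝ)) * P[fun ω => (⟪b i, D ω⟫ : ℝ)|m] =ᵐ[P] 0 := by
      filter_upwards [hgcond i] with ω hω
      simp [Pi.mul_apply, hω]
    rw [integral_congr_ae hz]
    simp
  have hrep : ∀ ω, (⟪Z ω, D ω⟫ : ℝ) = ∑ i, (⟪Z ω, b i⟫ : ℝ) * (⟪b i, D ω⟫ : ℝ) :=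
    fun ω => (b.sum_inner_mul_inner _ _).symm
  calc ∫ ω, (⟪Z ω, D ω⟫ : ℝ) ∂P
      = ∫ ω, ∑ i, (⟪Z ω, b i⟫ : ℝ) * (⟪b i, D ω⟫ : ℝ) ∂P :=
        integral_congr_ae (Filter.Eventually.of_forall fun ω => hrep ω)
    _ = ∑ i, ∫ ω, (⟪Z ω, b i⟫ : ℝ) * (⟪b i, D ω⟫ : ℝ) ∂P :=
        integral_finset_sum _ (fun i _ => hint i)
    _ = 0 := Finset.sum_eq_zero (fun i _ => hzero i)

lemma mgf_step {Ω : Type*} {m0 : MeasurableSpace Ω} {P : Measure Ω}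
    [IsProbabilityMeasure P] {E : Type*} [NormedAddCommGroup E] [InnerProductSpace ℝ E]
    [FiniteDimensional ℝ E] {m : MeasurableSpace Ω} (hm : m ≤ m0)
    (X D : Ω → E) (hX : StronglyMeasurable[m] X) (KX : ℝ) (hKX : 0 ≤ KX)
    (hXb : ∀ᵐ ω ∂P, ‖X ω‖ ≤ KX)
    (hDint : Integrable D P) (c : ℝ) (hDb : ∀ᵐ ω ∂P, ‖D ω‖ ≤ c)
    (hDcond : P[D|m] =ᵐ[P] 0) (lam : ℝ) (hlam : 0 ≤ lam) :
    ∫ ω, Real.cosh (lam * ‖X ω + D ω‖) ∂P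
      ≤ (∫ ω, Real.cosh (lam * ‖X ω‖) ∂P) * Real.cosh (lam * c) := by
  have hc0 : 0 ≤ c := by
    obtain ⟨ω, hω⟩ := hDb.exists
    exact (norm_nonneg _).trans hω
  rcases eq_or_lt_of_le hc0 with hc | hc
  · have hD0 : ∀ᵐ ω ∂P, D ω = 0 := by
      filter_upwards [hDb] with ω hω
      exact norm_le_zero_iff.1 (hω.trans hc.symm.le)
    have : ∫ ω, Real.cosh (lam * ‖X ω + D ω‖) ∂P = ∫ ω, Real.cosh (lam * ‖X ω‖) ∂P := by
      refine integral_congr_ae ?_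
      filter_upwards [hD0] with ω hω
      rw [hω, add_zero]
    rw [this, ← hc, mul_zero, Real.cosh_zero, mul_one]
  set Z : Ω → E := fun ω =>
    if ‖X ω‖ ≤ KX then
      (Real.sinh (lam * ‖X ω‖) * Real.sinh (lam * c) / (‖X ω‖ * c)) • X ω
    else 0 with hZdef
  have hnX : Measurable[m] fun ω => ‖X ω‖ := hX.norm.measurable
  have hZmeas : StronglyMeasurable[m] Z := by
    refine StronglyMeasurable.ite (measurableSet_le hnX measurable_const) ?_
      stronglyMeasurable_const
    refine StronglyMeasurable.smul ?_ hX
    refine Measurable.stronglyMeasurable ?_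
    exact ((Real.measurable_sinh.comp (hnX.const_mul lam)).mul measurable_const).div
      (hnX.mul measurable_const)
  set CZ : ℝ := Real.sinh (lam * KX) * Real.sinh (lam * c) / c with hCZdef
  have hCZ0 : 0 ≤ CZ :=
    div_nonneg (mul_nonneg (Real.sinh_nonneg_iff.2 (by positivity))
      (Real.sinh_nonneg_iff.2 (by positivity))) hc0
  have hZb : ∀ ω, ‖Z ω‖ ≤ CZ := by
    intro ω
    rw [hZdef]
    by_cases hxK : ‖X ω‖ ≤ KX
    · simp only [if_pos hxK]
      have hs0 : 0 ≤ Real.sinh (lam * ‖X ω‖) * Real.sinh (lam * c) / (‖X ω‖ * c) :=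
        div_nonneg (mul_nonneg (Real.sinh_nonneg_iff.2 (by positivity))
          (Real.sinh_nonneg_iff.2 (by positivity))) (by positivity)
      rw [norm_smul, Real.norm_eq_abs, abs_of_nonneg hs0]
      rcases eq_or_lt_of_le (norm_nonneg (X ω)) with h0 | h0
      · rw [← h0, mul_zero]
        exact hCZ0
      · have heq : Real.sinh (lam * ‖X ω‖) * Real.sinh (lam * c) / (‖X ω‖ * c) * ‖X ω‖
            = Real.sinh (lam * ‖X ω‖) * Real.sinh (lam * c) / c := by
          field_simp
        rw [heq, hCZdef]
        gcongr
        exact Real.sinh_le_sinh.2 (mul_le_mul_of_nonneg_left hxK hlam)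
    · simp only [if_neg hxK, norm_zero]
      exact hCZ0
  have hpt : ∀ᵐ ω ∂P, Real.cosh (lam * ‖X ω + D ω‖)
      ≤ Real.cosh (lam * ‖X ω‖) * Real.cosh (lam * c) + ⟪Z ω, D ω⟫ := by
    filter_upwards [hXb, hDb] with ω h1 h2
    have key := cosh_norm_add_le (X ω) (D ω) lam c hlam h2
    have hZω : Z ω = (Real.sinh (lam * ‖X ω‖) * Real.sinh (lam * c) / (‖X ω‖ * c)) • X ω := by
      rw [hZdef]; simp only [if_pos h1]
    rw [hZω, real_inner_smul_left]
    exact key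
  have hXaesm : AEStronglyMeasurable[m0] X P := (hX.mono hm).aestronglyMeasurable
  have hIL : Integrable (fun ω => Real.cosh (lam * ‖X ω + D ω‖)) P := by
    refine Integrable.mono' (integrable_const (Real.cosh (lam * (KX + c)))) ?_ ?_
    · exact Real.continuous_cosh.comp_aestronglyMeasurable
        (((hXaesm.add hDint.aestronglyMeasurable).norm).const_mul lam)
    · filter_upwards [hXb, hDb] with ω h1 h2
      rw [Real.norm_eq_abs, abs_of_pos (Real.cosh_pos _)]
      refine Real.cosh_le_cosh.2 ?_
      rw [abs_of_nonneg (by positivity), abs_of_nonneg (by positivity)]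
      refine mul_le_mul_of_nonneg_left ((norm_add_le _ _).trans ?_) hlam
      exact add_le_add h1 h2
  have hIR1 : Integrable (fun ω => Real.cosh (lam * ‖X ω‖)) P := by
    refine Integrable.mono' (integrable_const (Real.cosh (lam * KX))) ?_ ?_
    · exact Real.continuous_cosh.comp_aestronglyMeasurable ((hXaesm.norm).const_mul lam)
    · filter_upwards [hXb] with ω h1
      rw [Real.norm_eq_abs, abs_of_pos (Real.cosh_pos _)]
      refine Real.cosh_le_cosh.2 ?_
      rw [abs_of_nonneg (by positivity), abs_of_nonneg (by positivity)]
      exact mul_le_mul_of_nonneg_left h1 hlam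
  have hIZ : Integrable (fun ω => (⟪Z ω, D ω⟫ : ℝ)) P := by
    refine Integrable.mono' (integrable_const (CZ * c)) ?_ ?_
    · exact AEStronglyMeasurable.inner ((hZmeas.mono hm).aestronglyMeasurable)
        hDint.aestronglyMeasurable
    · filter_upwards [hDb] with ω h2
      rw [Real.norm_eq_abs]
      refine (abs_real_inner_le_norm _ _).trans ?_
      exact mul_le_mul (hZb ω) h2 (norm_nonneg _) hCZ0
  have hzero : ∫ ω, (⟪Z ω, D ω⟫ : ℝ) ∂P = 0 :=
    integral_inner_eq_zero hm Z D hZmeas CZ hZb hDint hDcond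
  calc ∫ ω, Real.cosh (lam * ‖X ω + D ω‖) ∂P
      ≤ ∫ ω, (Real.cosh (lam * ‖X ω‖) * Real.cosh (lam * c) + ⟪Z ω, D ω⟫) ∂P :=
        integral_mono_ae hIL ((hIR1.mul_const _).add hIZ) hpt
    _ = (∫ ω, Real.cosh (lam * ‖X ω‖) ∂P) * Real.cosh (lam * c)
        + ∫ ω, (⟪Z ω, D ω⟫ : ℝ) ∂P := by
        rw [integral_add (hIR1.mul_const _) hIZ, integral_mul_const]
    _ = (∫ ω, Real.cosh (lam * ‖X ω‖) ∂P) * Real.cosh (lam * c) := by rw [hzero, add_zero]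

lemma mgf_sum {Ω : Type*} {m0 : MeasurableSpace Ω} {P : Measure Ω} [IsProbabilityMeasure P]
    {E : Type*} [NormedAddCommGroup E] [InnerProductSpace ℝ E] [FiniteDimensional ℝ E]
    (ℱ : Filtration ℕ m0) (D : ℕ → Ω → E) (c : ℕ → ℝ) (hc : ∀ j, 0 ≤ c j)
    (hDm : ∀ j, StronglyMeasurable[ℱ (j+1)] (D j))
    (hDint : ∀ j, Integrable (D j) P)
    (hDb : ∀ j, ∀ᵐ ω ∂P, ‖D j ω‖ ≤ c j)
    (hDc : ∀ j, P[D j | ℱ j] =ᵐ[P] 0)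
    (lam : ℝ) (hlam : 0 ≤ lam) (n : ℕ) :
    ∫ ω, Real.cosh (lam * ‖∑ j ∈ Finset.range n, D j ω‖) ∂P
      ≤ ∏ j ∈ Finset.range n, Real.cosh (lam * c j) := by
  induction n with
  | zero => simp
  | succ n ih =>
    have hXm : StronglyMeasurable[ℱ n] (fun ω => ∑ j ∈ Finset.range n, D j ω) := by
      have h : StronglyMeasurable[ℱ n] (∑ j ∈ Finset.range n, D j) :=
        Finset.stronglyMeasurable_sum _ fun j hj =>
          (hDm j).mono (ℱ.mono (Finset.mem_range.1 hj))
      have he : (fun ω => ∑ j ∈ Finset.range n, D j ω) = ∑ j ∈ Finset.range n, D j := by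
        funext ω
        simp [Finset.sum_apply]
      rw [he]
      exact h
    have hXb : ∀ᵐ ω ∂P, ‖∑ j ∈ Finset.range n, D j ω‖ ≤ ∑ j ∈ Finset.range n, c j := by
      filter_upwards [ae_all_iff.2 hDb] with ω hω
      exact (norm_sum_le _ _).trans (Finset.sum_le_sum fun j _ => hω j)
    have hKX : 0 ≤ ∑ j ∈ Finset.range n, c j := Finset.sum_nonneg fun j _ => hc j
    have step := mgf_step (ℱ.le n) (fun ω => ∑ j ∈ Finset.range n, D j ω) (D n) hXm
      _ hKX hXb (hDint n) (c n) (hDb n) (hDc n) lam hlam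
    have hrw : (fun ω => Real.cosh (lam * ‖∑ j ∈ Finset.range (n+1), D j ω‖))
        = fun ω => Real.cosh (lam * ‖(∑ j ∈ Finset.range n, D j ω) + D n ω‖) := by
      funext ω
      rw [Finset.sum_range_succ]
    calc ∫ ω, Real.cosh (lam * ‖∑ j ∈ Finset.range (n+1), D j ω‖) ∂P
        = ∫ ω, Real.cosh (lam * ‖(∑ j ∈ Finset.range n, D j ω) + D n ω‖) ∂P := by rw [hrw]
      _ ≤ (∫ ω, Real.cosh (lam * ‖∑ j ∈ Finset.range n, D j ω‖) ∂P) * Real.cosh (lam * c n) :=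
          step
      _ ≤ (∏ j ∈ Finset.range n, Real.cosh (lam * c j)) * Real.cosh (lam * c n) :=
          mul_le_mul_of_nonneg_right ih (Real.cosh_pos _).le
      _ = ∏ j ∈ Finset.range (n+1), Real.cosh (lam * c j) := (Finset.prod_range_succ _ _).symm

end AuxProbability
section Tail

lemma markov_bound {Ω : Type*} {m0 : MeasurableSpace Ω} {P : Measure Ω}
    [IsProbabilityMeasure P] (Y : Ω → ℝ)
    (hY0 : 0 ≤ᵐ[P] Y) (hYint : Integrable Y P) (y0 : ℝ) (hy0 : 0 < y0)
    (A : Set Ω) (hA : A ⊆ {ω | y0 ≤ Y ω}) :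
    P A ≤ ENNReal.ofReal ((∫ ω, Y ω ∂P) / y0) := by
  have hmark := mul_meas_ge_le_integral_of_nonneg hY0 hYint y0
  have hfin : P {ω | y0 ≤ Y ω} ≠ ⊤ := measure_ne_top _ _
  have htoR : (P {ω | y0 ≤ Y ω}).toReal ≤ (∫ ω, Y ω ∂P) / y0 := by
    rw [le_div_iff₀ hy0]
    rw [measureReal_def] at hmark
    linarith
  calc P A ≤ P {ω | y0 ≤ Y ω} := measure_mono hA
    _ = ENNReal.ofReal ((P {ω | y0 ≤ Y ω}).toReal) := (ENNReal.ofReal_toReal hfin).symm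
    _ ≤ ENNReal.ofReal ((∫ ω, Y ω ∂P) / y0) := ENNReal.ofReal_le_ofReal htoR

lemma tail_prob {Ω : Type*} {m0 : MeasurableSpace Ω} {P : Measure Ω} [IsProbabilityMeasure P]
    {E : Type*} [NormedAddCommGroup E] [InnerProductSpace ℝ E] [FiniteDimensional ℝ E]
    (ℱ : Filtration ℕ m0) (ε : ℕ → Ω → E)
    (hmeas : ∀ t, 1 ≤ t → StronglyMeasurable[ℱ t] (ε t))
    (hint : ∀ t, 1 ≤ t → Integrable (ε t) P)
    (hcond : ∀ t, 1 ≤ t → P[ε t | ℱ (t - 1)] =ᵐ[P] 0)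
    (c0 : ℝ) (hc0 : 0 ≤ c0) (heps : ∀ t, 1 ≤ t → ∀ᵐ ω ∂P, ‖ε t ω‖ ≤ c0)
    (β₁ : ℝ) (hβ₁0 : 0 ≤ β₁) (hβ₁1 : β₁ < 1)
    (lam : ℝ) (hlam : 0 ≤ lam) (n : ℕ) (r : ℝ) (hr0 : 0 ≤ r) :
    P {ω | r < ‖∑ τ ∈ Finset.range n, β₁ ^ τ • ε (n - τ) ω‖}
      ≤ ENNReal.ofReal
        (Real.exp (lam ^ 2 * (c0 ^ 2 / (1 - β₁)) / 2) / Real.cosh (lam * r)) := by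
  have hβpos : (0:ℝ) < 1 - β₁ := by linarith
  -- increments
  have hDm : ∀ j : ℕ, StronglyMeasurable[ℱ (j+1)] (β₁ ^ (n - 1 - j) • ε (j + 1)) := fun j =>
    (hmeas (j+1) (by omega)).const_smul _
  have hDint : ∀ j : ℕ, Integrable (β₁ ^ (n - 1 - j) • ε (j + 1)) P := fun j =>
    (hint (j+1) (by omega)).smul _
  have hDb : ∀ j : ℕ, ∀ᵐ ω ∂P, ‖(β₁ ^ (n - 1 - j) • ε (j + 1)) ω‖
      ≤ β₁ ^ (n - 1 - j) * c0 := by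
    intro j
    filter_upwards [heps (j+1) (by omega)] with ω hω
    have h1 : ‖(β₁ ^ (n - 1 - j) • ε (j + 1)) ω‖ = β₁ ^ (n - 1 - j) * ‖ε (j+1) ω‖ := by
      rw [Pi.smul_apply, norm_smul, Real.norm_eq_abs, abs_pow, abs_of_nonneg hβ₁0]
    rw [h1]
    exact mul_le_mul_of_nonneg_left hω (pow_nonneg hβ₁0 _)
  have hDc : ∀ j : ℕ, P[β₁ ^ (n - 1 - j) • ε (j + 1) | ℱ j] =ᵐ[P] 0 := by
    intro j
    have h2 := hcond (j+1) (by omega)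
    simp only [Nat.add_sub_cancel] at h2
    have h1 := condExp_smul (μ := P) (m := ℱ j) (β₁ ^ (n - 1 - j)) (ε (j+1))
    refine h1.trans ?_
    filter_upwards [h2] with ω hω
    simp only [Pi.smul_apply, hω, Pi.zero_apply, smul_zero]
  have hmgf := mgf_sum ℱ (fun j => β₁ ^ (n - 1 - j) • ε (j + 1))
    (fun j => β₁ ^ (n - 1 - j) * c0)
    (fun j => mul_nonneg (pow_nonneg hβ₁0 _) hc0) hDm hDint hDb hDc lam hlam n
  -- identify the weighted sum with the martingale sum
  have hsum : ∀ ω, ∑ τ ∈ Finset.range n, β₁ ^ τ • ε (n - τ) ω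
      = ∑ j ∈ Finset.range n, (β₁ ^ (n - 1 - j) • ε (j + 1)) ω := by
    intro ω
    rw [← Finset.sum_range_reflect]
    refine Finset.sum_congr rfl (fun j hj => ?_)
    have hj' := Finset.mem_range.1 hj
    simp only [Pi.smul_apply]
    rw [show n - (n - 1 - j) = j + 1 by omega]
  -- variance bound
  have hsumsq : ∑ j ∈ Finset.range n, (β₁ ^ (n - 1 - j) * c0) ^ 2 ≤ c0 ^ 2 / (1 - β₁) := by
    have h1 : ∀ j : ℕ, (β₁ ^ (n - 1 - j) * c0) ^ 2 = c0 ^ 2 * (β₁ ^ 2) ^ (n - 1 - j) := by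
      intro j
      rw [← pow_mul, mul_comm 2 (n - 1 - j), pow_mul]
      ring
    have h2 : ∑ j ∈ Finset.range n, (β₁ ^ 2) ^ (n - 1 - j)
        = ∑ τ ∈ Finset.range n, (β₁ ^ 2) ^ τ := Finset.sum_range_reflect _ n
    have hq1 : β₁ ^ 2 < 1 := by nlinarith
    have hq0 : (0:ℝ) ≤ β₁ ^ 2 := sq_nonneg _
    have h3 : ∑ τ ∈ Finset.range n, (β₁ ^ 2) ^ τ ≤ 1 / (1 - β₁ ^ 2) := by
      rw [geom_sum_eq hq1.ne]
      have hpos : (0:ℝ) < 1 - β₁ ^ 2 := by linarith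
      have heq : ((β₁ ^ 2) ^ n - 1) / (β₁ ^ 2 - 1) = (1 - (β₁ ^ 2) ^ n) / (1 - β₁ ^ 2) := by
        rw [div_eq_div_iff (by linarith) (by linarith)]
        ring
      rw [heq]
      have hpn : (0:ℝ) ≤ (β₁ ^ 2) ^ n := pow_nonneg hq0 n
      gcongr
      linarith
    have h4 : 1 / (1 - β₁ ^ 2) ≤ 1 / (1 - β₁) := by
      have hle : 1 - β₁ ≤ 1 - β₁ ^ 2 := by nlinarith
      gcongr
    calc ∑ j ∈ Finset.range n, (β₁ ^ (n - 1 - j) * c0) ^ 2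
        = c0 ^ 2 * ∑ j ∈ Finset.range n, (β₁ ^ 2) ^ (n - 1 - j) := by
          rw [Finset.mul_sum]
          exact Finset.sum_congr rfl (fun j _ => h1 j)
      _ ≤ c0 ^ 2 * (1 / (1 - β₁)) := by
          rw [h2]
          exact mul_le_mul_of_nonneg_left (h3.trans h4) (by positivity)
      _ = c0 ^ 2 / (1 - β₁) := by ring
  have hprod : ∏ j ∈ Finset.range n, Real.cosh (lam * (β₁ ^ (n - 1 - j) * c0))
      ≤ Real.exp (lam ^ 2 * (c0 ^ 2 / (1 - β₁)) / 2) := by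
    calc ∏ j ∈ Finset.range n, Real.cosh (lam * (β₁ ^ (n - 1 - j) * c0))
        ≤ ∏ j ∈ Finset.range n, Real.exp ((lam * (β₁ ^ (n - 1 - j) * c0)) ^ 2 / 2) :=
          Finset.prod_le_prod (fun j _ => (Real.cosh_pos _).le)
            (fun j _ => Real.cosh_le_exp_half_sq _)
      _ = Real.exp (∑ j ∈ Finset.range n, (lam * (β₁ ^ (n - 1 - j) * c0)) ^ 2 / 2) :=
          (Real.exp_sum _ _).symm
      _ ≤ Real.exp (lam ^ 2 * (c0 ^ 2 / (1 - β₁)) / 2) := by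
          refine Real.exp_le_exp.2 ?_
          have he : ∑ j ∈ Finset.range n, (lam * (β₁ ^ (n - 1 - j) * c0)) ^ 2 / 2
              = lam ^ 2 / 2 * ∑ j ∈ Finset.range n, (β₁ ^ (n - 1 - j) * c0) ^ 2 := by
            rw [Finset.mul_sum]
            exact Finset.sum_congr rfl (fun j _ => by ring)
          rw [he]
          calc lam ^ 2 / 2 * ∑ j ∈ Finset.range n, (β₁ ^ (n - 1 - j) * c0) ^ 2
              ≤ lam ^ 2 / 2 * (c0 ^ 2 / (1 - β₁)) :=
                mul_le_mul_of_nonneg_left hsumsq (by positivity)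
            _ = lam ^ 2 * (c0 ^ 2 / (1 - β₁)) / 2 := by ring
  -- integrability of the test function
  have hSM : StronglyMeasurable[ℱ n]
      (fun ω => ∑ j ∈ Finset.range n, (β₁ ^ (n - 1 - j) • ε (j + 1)) ω) := by
    have h : StronglyMeasurable[ℱ n] (∑ j ∈ Finset.range n, β₁ ^ (n - 1 - j) • ε (j + 1)) :=
      Finset.stronglyMeasurable_sum _ fun j hj =>
        (hDm j).mono (ℱ.mono (Finset.mem_range.1 hj))
    have he : (fun ω => ∑ j ∈ Finset.range n, (β₁ ^ (n - 1 - j) • ε (j + 1)) ω)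
        = ∑ j ∈ Finset.range n, β₁ ^ (n - 1 - j) • ε (j + 1) := by
      funext ω
      simp [Finset.sum_apply]
    rw [he]
    exact h
  have hBaesm : AEStronglyMeasurable
      (fun ω => ∑ j ∈ Finset.range n, (β₁ ^ (n - 1 - j) • ε (j + 1)) ω) P :=
    (hSM.mono (ℱ.le n)).aestronglyMeasurable
  have hBb : ∀ᵐ ω ∂P, ‖∑ j ∈ Finset.range n, (β₁ ^ (n - 1 - j) • ε (j + 1)) ω‖
      ≤ ∑ j ∈ Finset.range n, β₁ ^ (n - 1 - j) * c0 := by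
    filter_upwards [ae_all_iff.2 hDb] with ω hω
    exact (norm_sum_le _ _).trans (Finset.sum_le_sum fun j _ => hω j)
  have hYint : Integrable
      (fun ω => Real.cosh (lam * ‖∑ j ∈ Finset.range n, (β₁ ^ (n - 1 - j) • ε (j + 1)) ω‖)) P := by
    refine Integrable.mono' (integrable_const
      (Real.cosh (lam * ∑ j ∈ Finset.range n, β₁ ^ (n - 1 - j) * c0))) ?_ ?_
    · exact Real.continuous_cosh.comp_aestronglyMeasurable ((hBaesm.norm).const_mul lam)
    · filter_upwards [hBb] with ω h1
      rw [Real.norm_eq_abs, abs_of_pos (Real.cosh_pos _)]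
      refine Real.cosh_le_cosh.2 ?_
      rw [abs_of_nonneg (by positivity), abs_of_nonneg]
      · exact mul_le_mul_of_nonneg_left h1 hlam
      · have : (0:ℝ) ≤ ∑ j ∈ Finset.range n, β₁ ^ (n - 1 - j) * c0 :=
          Finset.sum_nonneg fun j _ => mul_nonneg (pow_nonneg hβ₁0 _) hc0
        positivity
  -- Markov
  have hsubA : {ω | r < ‖∑ τ ∈ Finset.range n, β₁ ^ τ • ε (n - τ) ω‖}
      ⊆ {ω | Real.cosh (lam * r)
        ≤ Real.cosh (lam * ‖∑ j ∈ Finset.range n, (β₁ ^ (n - 1 - j) • ε (j + 1)) ω‖)} := by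
    intro ω hω
    simp only [Set.mem_setOf_eq] at hω ⊢
    rw [← hsum ω]
    refine Real.cosh_le_cosh.2 ?_
    rw [abs_of_nonneg (by positivity), abs_of_nonneg (by positivity)]
    exact mul_le_mul_of_nonneg_left hω.le hlam
  have hY0 : 0 ≤ᵐ[P] fun ω =>
      Real.cosh (lam * ‖∑ j ∈ Finset.range n, (β₁ ^ (n - 1 - j) • ε (j + 1)) ω‖) :=
    Filter.Eventually.of_forall (fun ω => (Real.cosh_pos _).le)
  have hmar := markov_bound _ hY0 hYint (Real.cosh (lam * r)) (Real.cosh_pos _) _ hsubA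
  refine hmar.trans (ENNReal.ofReal_le_ofReal ?_)
  refine (div_le_div_iff_of_pos_right (Real.cosh_pos _)).2 ?_
  exact hmgf.trans hprod

end Tail

/-- High-probability dual-norm bound for exponentially weighted sums of
bounded martingale-difference noise: with probability at least `1 - δ`, simultaneously for
all `1 ≤ t ≤ T`,
`‖∑_{τ<t} β₁^τ ε_{t-τ}‖_* ≤ (4 C₂ σ̄ / C₁) √(log(2T/δ)/(1-β₁))`. -/
theorem stmt_10 {Ω : Type*} {m0 : MeasurableSpace Ω} {P : Measure Ω} [IsProbabilityMeasure P]
    {E : Type*} [NormedAddCommGroup E] [InnerProductSpace ℝ E] [FiniteDimensional ℝ E]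
    (N : Seminorm ℝ E) (hNdef : ∀ x, N x = 0 → x = 0)
    (C₁ C₂ : ℝ) (hC₁0 : 0 < C₁) (hC₁1 : C₁ ≤ 1) (hC₂ : 1 ≤ C₂)
    (hcomp : ∀ A : E, C₁ * dualNorm N A ≤ ‖A‖ ∧ ‖A‖ ≤ C₂ * dualNorm N A)
    (ℱ : Filtration ℕ m0)
    (ε : ℕ → Ω → E)
    (hmeas : ∀ t, 1 ≤ t → StronglyMeasurable[ℱ t] (ε t))
    (hint : ∀ t, 1 ≤ t → Integrable (ε t) P)
    (hcond : ∀ t, 1 ≤ t → P[ε t | ℱ (t - 1)] =ᵐ[P] 0)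
    (σbar : ℝ) (hσ : 0 ≤ σbar)
    (hbd : ∀ t, 1 ≤ t → ∀ᵐ ω ∂P, dualNorm N (ε t ω) ≤ σbar)
    (β₁ : ℝ) (hβ₁0 : 0 ≤ β₁) (hβ₁1 : β₁ < 1)
    (T : ℕ) (hT : 1 ≤ T) (δ : ℝ) (hδ : δ ∈ Set.Ioo (0 : ℝ) 1) :
    ENNReal.ofReal (1 - δ) ≤
      P {ω | ∀ t, 1 ≤ t → t ≤ T →
        dualNorm N (∑ τ ∈ Finset.range t, β₁ ^ τ • ε (t - τ) ω)
          ≤ 4 * C₂ * σbar / C₁ * Real.sqrt (Real.log (2 * T / δ) / (1 - β₁))} := by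
  obtain ⟨hδ0, hδ1⟩ := hδ
  have hβpos : (0:ℝ) < 1 - β₁ := by linarith
  have hC₂0 : (0:ℝ) < C₂ := by linarith
  have hTpos : (0:ℝ) < (T:ℝ) := by exact_mod_cast hT
  have hT1 : (1:ℝ) ≤ (T:ℝ) := by exact_mod_cast hT
  have h2T : (1:ℝ) < 2 * T / δ := by
    rw [lt_div_iff₀ hδ0]
    nlinarith
  have hL0 : 0 < Real.log (2 * T / δ) := Real.log_pos h2T
  have hdual_le : ∀ A : E, dualNorm N A ≤ ‖A‖ / C₁ := fun A =>
    (le_div_iff₀' hC₁0).2 (hcomp A).1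
  have heps : ∀ t, 1 ≤ t → ∀ᵐ ω ∂P, ‖ε t ω‖ ≤ C₂ * σbar := by
    intro t ht
    filter_upwards [hbd t ht] with ω hω
    exact (hcomp (ε t ω)).2.trans (mul_le_mul_of_nonneg_left hω hC₂0.le)
  set S := {ω : Ω | ∀ t, 1 ≤ t → t ≤ T →
      dualNorm N (∑ τ ∈ Finset.range t, β₁ ^ τ • ε (t - τ) ω)
        ≤ 4 * C₂ * σbar / C₁ * Real.sqrt (Real.log (2 * T / δ) / (1 - β₁))} with hSdef
  have hunion : ∀ bad : Set Ω, Sᶜ ⊆ bad → P bad ≤ ENNReal.ofReal δ →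
      ENNReal.ofReal (1 - δ) ≤ P S := by
    intro bad hsub hbad
    have h1 : (1:ENNReal) ≤ P S + ENNReal.ofReal δ := by
      calc (1:ENNReal) = P Set.univ := (measure_univ).symm
        _ = P (S ∪ Sᶜ) := by rw [Set.union_compl_self]
        _ ≤ P S + P Sᶜ := measure_union_le _ _
        _ ≤ P S + P bad := add_le_add le_rfl (measure_mono hsub)
        _ ≤ P S + ENNReal.ofReal δ := add_le_add le_rfl hbad
    have h2 : ENNReal.ofReal (1 - δ) + ENNReal.ofReal δ = 1 := by
      rw [← ENNReal.ofReal_add (by linarith) hδ0.le]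
      norm_num
    have h3 : ENNReal.ofReal (1 - δ) + ENNReal.ofReal δ ≤ P S + ENNReal.ofReal δ := by
      rw [h2]
      exact h1
    exact ENNReal.le_of_add_le_add_right ENNReal.ofReal_ne_top h3
  rcases eq_or_lt_of_le hσ with hσ0 | hσpos
  · -- degenerate case `σbar = 0` : all noise vanishes a.e.
    have hae : ∀ᵐ ω ∂P, ∀ t, 1 ≤ t → ε t ω = 0 := by
      rw [ae_all_iff]
      intro t
      rcases Nat.lt_or_ge t 1 with h | h
      · filter_upwards with ω ht
        omega
      · filter_upwards [heps t h] with ω hω _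
        rw [← hσ0, mul_zero] at hω
        exact norm_le_zero_iff.1 hω
    have hd0 : dualNorm N (0:E) = 0 := by
      have h1 := (hcomp 0).1
      have h2 := (hcomp 0).2
      rw [norm_zero] at h1 h2
      nlinarith
    have hsub : Sᶜ ⊆ {ω | ¬ ∀ t, 1 ≤ t → ε t ω = 0} := by
      intro ω hω hall
      apply hω
      simp only [hSdef, Set.mem_setOf_eq]
      intro t ht1 htT
      have hz : ∑ τ ∈ Finset.range t, β₁ ^ τ • ε (t - τ) ω = 0 := by
        refine Finset.sum_eq_zero fun τ hτ => ?_
        have hττ := Finset.mem_range.1 hτ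
        rw [hall (t - τ) (by omega), smul_zero]
      rw [hz, hd0, ← hσ0]
      simp
    refine hunion _ hsub ?_
    have hnull : P {ω | ¬ ∀ t, 1 ≤ t → ε t ω = 0} = 0 := hae
    rw [hnull]
    exact zero_le
  · -- main case `σbar > 0`
    have hc0pos : (0:ℝ) < C₂ * σbar := mul_pos hC₂0 hσpos
    set L := Real.log (2 * (T:ℝ) / δ) with hLdef
    set V : ℝ := (C₂ * σbar) ^ 2 / (1 - β₁) with hVdef
    have hV : 0 < V := by positivity
    have hsq : (0:ℝ) < L / (1 - β₁) := by positivity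
    set r : ℝ := 4 * (C₂ * σbar) * Real.sqrt (L / (1 - β₁)) with hrdef
    have hsqrtpos : 0 < Real.sqrt (L / (1 - β₁)) := Real.sqrt_pos.2 hsq
    have hr : 0 < r := by
      rw [hrdef]
      positivity
    set lam : ℝ := r / V with hlamdef
    have hlam0 : 0 ≤ lam := div_nonneg hr.le hV.le
    have hrK : r / C₁ = 4 * C₂ * σbar / C₁ * Real.sqrt (L / (1 - β₁)) := by
      rw [hrdef]
      field_simp
    -- numeric estimate
    have hcosh_lb : Real.exp (lam * r) / 2 ≤ Real.cosh (lam * r) := by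
      rw [Real.cosh_eq]
      have := (Real.exp_pos (-(lam * r))).le
      linarith
    have hkey : lam ^ 2 * V / 2 - lam * r = -(8 * L) := by
      have hr2 : r ^ 2 = 16 * (C₂ * σbar) ^ 2 * (L / (1 - β₁)) := by
        rw [hrdef, mul_pow, mul_pow, Real.sq_sqrt hsq.le]
        norm_num
      have k1 : lam ^ 2 * V / 2 - lam * r = -(r ^ 2 / (2 * V)) := by
        rw [hlamdef]
        field_simp
        ring
      have k2 : r ^ 2 / (2 * V) = 8 * L := by
        rw [hr2, hVdef]
        rw [div_eq_iff (by positivity)]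
        field_simp
        ring
      rw [k1, k2]
    have hexpL : Real.exp (-L) = δ / (2 * T) := by
      rw [hLdef, Real.exp_neg, Real.exp_log (by positivity), inv_div]
    have h8 : Real.exp (-(8 * L)) = (δ / (2 * T)) ^ 8 := by
      rw [← hexpL, ← Real.exp_nat_mul]
      norm_num
    have hq1 : δ / (2 * T) ≤ 1 := by
      rw [div_le_one (by positivity)]
      nlinarith
    have hq0 : (0:ℝ) ≤ δ / (2 * T) := by positivity
    have hpow8 : (δ / (2 * T)) ^ 8 ≤ δ / (2 * T) := pow_le_of_le_one hq0 hq1 (by norm_num)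
    have heq2 : 2 * (δ / (2 * (T:ℝ))) = δ / T := by
      field_simp
    have hnum : Real.exp (lam ^ 2 * V / 2) / Real.cosh (lam * r) ≤ δ / T := by
      calc Real.exp (lam ^ 2 * V / 2) / Real.cosh (lam * r)
          ≤ Real.exp (lam ^ 2 * V / 2) / (Real.exp (lam * r) / 2) :=
            div_le_div_of_nonneg_left (Real.exp_pos _).le (by positivity) hcosh_lb
        _ = 2 * Real.exp (lam ^ 2 * V / 2 - lam * r) := by
            rw [Real.exp_sub]
            field_simp
        _ = 2 * (δ / (2 * T)) ^ 8 := by rw [hkey, h8]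
        _ ≤ 2 * (δ / (2 * T)) := by linarith
        _ = δ / T := heq2
    -- union bound
    refine hunion (⋃ t ∈ Finset.Icc 1 T,
      {ω | r < ‖∑ τ ∈ Finset.range t, β₁ ^ τ • ε (t - τ) ω‖}) ?_ ?_
    · intro ω hω
      by_contra hno
      apply hω
      simp only [hSdef, Set.mem_setOf_eq]
      intro t ht1 htT
      have hle : ‖∑ τ ∈ Finset.range t, β₁ ^ τ • ε (t - τ) ω‖ ≤ r := by
        by_contra hgt
        push_neg at hgt
        exact hno (Set.mem_biUnion (Finset.mem_Icc.2 ⟨ht1, htT⟩) hgt)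
      calc dualNorm N (∑ τ ∈ Finset.range t, β₁ ^ τ • ε (t - τ) ω)
          ≤ ‖∑ τ ∈ Finset.range t, β₁ ^ τ • ε (t - τ) ω‖ / C₁ := hdual_le _
        _ ≤ r / C₁ := by gcongr
        _ = 4 * C₂ * σbar / C₁ * Real.sqrt (L / (1 - β₁)) := hrK
    · calc P (⋃ t ∈ Finset.Icc 1 T, {ω | r < ‖∑ τ ∈ Finset.range t, β₁ ^ τ • ε (t - τ) ω‖})
          ≤ ∑ t ∈ Finset.Icc 1 T,
            P {ω | r < ‖∑ τ ∈ Finset.range t, β₁ ^ τ • ε (t - τ) ω‖} :=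
            measure_biUnion_finset_le _ _
        _ ≤ ∑ _t ∈ Finset.Icc 1 T, ENNReal.ofReal (δ / T) := by
            refine Finset.sum_le_sum (fun t ht => ?_)
            refine (tail_prob ℱ ε hmeas hint hcond (C₂ * σbar) hc0pos.le heps
              β₁ hβ₁0 hβ₁1 lam hlam0 t r hr.le).trans ?_
            exact ENNReal.ofReal_le_ofReal hnum
        _ = (T : ENNReal) * ENNReal.ofReal (δ / T) := by
            rw [Finset.sum_const, Nat.card_Icc]
            simp [nsmul_eq_mul]
        _ = ENNReal.ofReal δ := by
            rw [← ENNReal.ofReal_natCast T, ← ENNReal.ofReal_mul (by positivity)]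
            congr 1
            field_simp
end
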